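/- arXiv:1710.03884 — 15 statements merged into one kernel-verified Lean document; each statement's English description precedes it below -/
import Mathlib

section
/- Let (M,g,J) be an almost anti-Hermitian manifold with Levi-Civita connection ∇. If there is a real constant ε such that (∇_{JX} J)Y = ε·J(∇_X J)Y for all vector fields X,Y, then ∇J ≡ 0, i.e. (M,g,J) is anti-Kähler. -/
/-- Algebraic model of the proposition: if an almost anti-Hermitian structure
(`g` symmetric nondegenerate, `J² = -Id`, `J` `g`-symmetric, `∇` metric
compatible) satisfies `(∇_{JX} J) Y = ε • J ((∇_X J) Y)` for some real
constant `ε`, then `∇ J ≡ 0`, i.e. the structure is anti-Kähler. -/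
theorem antiKaehler_of_nablaJ_relation
    (V : Type*) [AddCommGroup V] [Module ℝ V]
    (g : V →ₗ[ℝ] V →ₗ[ℝ] ℝ)
    (hsymm : ∀ Y Z, g Y Z = g Z Y)
    (hnd : ∀ Y, (∀ Z, g Y Z = 0) → Y = 0)
    (J : V →ₗ[ℝ] V) (hJ2 : ∀ Y, J (J Y) = -Y)
    (hJsym : ∀ Y Z, g (J Y) Z = g Y (J Z))
    (nabla : V →ₗ[ℝ] V →ₗ[ℝ] V)
    (hcompat : ∀ X Y Z, g (nabla X Y) Z + g Y (nabla X Z) = 0)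
    (ε : ℝ)
    (hyp : ∀ X Y, nabla (J X) (J Y) - J (nabla (J X) Y)
        = ε • J (nabla X (J Y) - J (nabla X Y))) :
    ∀ X Y, nabla X (J Y) = J (nabla X Y) := by
  set A : V → V → V := fun X Y => nabla X (J Y) - J (nabla X Y) with hA
  -- A anticommutes with J in the second slot
  have hAJ : ∀ X Y, A X (J Y) = - J (A X Y) := by
    intro X Y
    simp only [hA, hJ2, map_neg, map_sub]
    abel
  -- A is minus-linear in the first slot under J∘J
  have hAneg : ∀ X Y, A (J (J X)) Y = - A X Y := by
    intro X Y
    simp only [hA, hJ2, map_neg, LinearMap.neg_apply]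
    abel
  -- A X is g-symmetric
  have hAsym : ∀ X Y Z, g (A X Y) Z = g Y (A X Z) := by
    intro X Y Z
    simp only [hA, map_sub, LinearMap.sub_apply]
    linear_combination hcompat X (J Y) Z - hcompat X Y (J Z)
      - hJsym (nabla X Y) Z - hJsym Y (nabla X Z)
  have hypA : ∀ X Y, A (J X) Y = ε • J (A X Y) := hyp
  -- main goal: A X Y = 0
  suffices h : ∀ X Y, A X Y = 0 by
    intro X Y
    have := h X Y
    simp only [hA, sub_eq_zero] at this
    exact this
  intro X Y
  by_cases hε : ε = 0
  · have h1 : A (J (J X)) Y = 0 := by rw [hypA, hε, zero_smul]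
    have := hAneg X Y
    rw [h1] at this
    exact neg_eq_zero.mp this.symm
  · -- 2 ε g (J (A X Y)) Z = 0 for all Z
    have key : ∀ Z, g (J (A X Y)) Z = 0 := by
      intro Z
      have e1 : g (A (J X) Y) Z = ε * g (J (A X Y)) Z := by
        rw [hypA]; simp [map_smul]
      have e2 : g (A (J X) Y) Z = - (ε * g (J (A X Y)) Z) := by
        rw [hAsym]
        rw [hypA]
        rw [map_smul, smul_eq_mul]
        have : g Y (J (A X Z)) = g (J Y) (A X Z) := (hJsym Y (A X Z)).symm
        rw [this, ← hAsym X (J Y) Z, hAJ]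
        simp
      have : ε * g (J (A X Y)) Z = 0 := by linarith [e1.symm.trans e2]
      exact (mul_eq_zero.mp this).resolve_left hε
    have hJ0 : J (A X Y) = 0 := hnd _ key
    have := congrArg J hJ0
    rw [hJ2] at this
    simp at this
    exact this
end

section
/- Let G be a Lie group with a left invariant pseudo-Riemannian metric g and a left invariant almost complex structure J such that (g,J) is almost anti-Hermitian. If the Levi-Civita connection satisfies ∇_{JX}Y = -J∇_X Y for all left invariant vector fields X, Y, then (G,g,J) is anti-Kähler and J is an abelian complex structure, i.e. [JX,JY] = [X,Y] on the Lie algebra. -/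
/-- Lie-algebra formulation: a left invariant almost anti-Hermitian structure
(inner product `B`, complex structure `J` with `B(JX,JY) = -B(X,Y)`, and
Levi-Civita connection `∇` given by the Koszul formula) satisfying
`∇_{JX} Y = -J ∇_X Y` is anti-Kähler (`∇_X (JY) = J ∇_X Y`) and `J` is an
abelian complex structure (`[JX,JY] = [X,Y]`). -/
theorem antiKaehler_abelian_of_nabla_anticomm
    (V : Type*) [LieRing V] [LieAlgebra ℝ V]
    (B : V →ₗ[ℝ] V →ₗ[ℝ] ℝ)
    (hsymm : ∀ X Y, B X Y = B Y X)
    (hnd : ∀ X, (∀ Y, B X Y = 0) → X = 0)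
    (J : V →ₗ[ℝ] V) (hJ2 : ∀ X, J (J X) = -X)
    (hJB : ∀ X Y, B (J X) (J Y) = - B X Y)
    (nabla : V →ₗ[ℝ] V →ₗ[ℝ] V)
    (hKoszul : ∀ X Y Z, 2 * B (nabla X Y) Z
        = B ⁅X, Y⁆ Z - B ⁅Y, Z⁆ X + B ⁅Z, X⁆ Y)
    (hyp : ∀ X Y, nabla (J X) Y = - J (nabla X Y)) :
    (∀ X Y, nabla X (J Y) = J (nabla X Y)) ∧
    (∀ X Y, ⁅J X, J Y⁆ = ⁅X, Y⁆) := by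
  -- J is B-symmetric
  have hb : ∀ X Y, B (J X) Y = B X (J Y) := by
    intro X Y
    have h := hJB X (J Y)
    rw [hJ2] at h
    simpa using h
  -- skew-symmetry of B ⁅·,·⁆ ·
  have sk : ∀ a b c : V, B ⁅a, b⁆ c = - B ⁅b, a⁆ c := by
    intro a b c
    rw [← lie_skew a b, map_neg]
    simp
  -- the key identity coming from the hypothesis and the Koszul formula
  have star : ∀ X Y Z : V,
      B ⁅J X, Y⁆ Z - B ⁅Y, Z⁆ (J X) + B ⁅Z, J X⁆ Y
        + (B ⁅X, Y⁆ (J Z) - B ⁅Y, J Z⁆ X + B ⁅J Z, X⁆ Y) = 0 := by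
    intro X Y Z
    have h1 := hKoszul (J X) Y Z
    have h2 := hKoszul X Y (J Z)
    rw [hyp] at h1
    have h3 : B (-J (nabla X Y)) Z = - B (nabla X Y) (J Z) := by
      rw [map_neg, LinearMap.neg_apply, hb]
    rw [h3] at h1
    linarith
  constructor
  · -- anti-Kähler
    intro X Y
    have key : ∀ Z : V, B (nabla X (J Y) - J (nabla X Y)) Z = 0 := by
      intro Z
      have k1 := hKoszul X (J Y) Z
      have k2 := hKoszul X Y (J Z)
      have hb' : B (J (nabla X Y)) Z = B (nabla X Y) (J Z) := hb _ _
      have e3 := star X Y Z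
      have e4 := star X Z Y
      have goal' : B (nabla X (J Y) - J (nabla X Y)) Z
          = B (nabla X (J Y)) Z - B (J (nabla X Y)) Z := by
        simp
      rw [goal']
      linarith [sk X (J Y) Z, sk (J Y) Z X, sk Z X (J Y), sk (J X) Y Z,
        sk Z Y (J X), sk (J X) Z Y]
    have := hnd _ key
    rw [sub_eq_zero] at this
    exact this
  · -- abelian complex structure
    intro X Y
    have key : ∀ Z : V, B (⁅J X, J Y⁆ - ⁅X, Y⁆) Z = 0 := by
      intro Z
      have e1 := star X Z (J Y)
      have e2 := star Y Z (J X)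
      simp only [hJ2, lie_neg, neg_lie, map_neg, LinearMap.neg_apply, neg_neg] at e1 e2
      have goal' : B (⁅J X, J Y⁆ - ⁅X, Y⁆) Z = B ⁅J X, J Y⁆ Z - B ⁅X, Y⁆ Z := by
        simp
      rw [goal']
      linarith [sk (J Y) (J X) Z, sk Z (J X) (J Y), sk (J Y) Z (J X),
        sk Z X Y, sk Y Z X, sk Y X Z]
    have := hnd _ key
    rw [sub_eq_zero] at this
    exact this
end

section
/- Let 𝔤 be a Lie algebra with inner product ⟨·,·⟩ and complex structure J (J² = -Id, ⟨JX,JY⟩ = -⟨X,Y⟩), and let ∇ be the Levi-Civita connection defined via the Koszul formula. If ∇_{JX}Y = J∇_X Y for all X,Y ∈ 𝔤, then the structure is anti-Kähler (∇_X(JY) = J∇_X Y for all X,Y) and J is bi-invariant: [JX,Y] = J[X,Y] for all X,Y ∈ 𝔤. -/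
/-- Lie-algebra formulation: an almost anti-Hermitian structure whose
Levi-Civita connection (Koszul formula) satisfies `∇_{JX} Y = J ∇_X Y` is
anti-Kähler and `J` is bi-invariant: `[JX,Y] = J[X,Y]`. -/
theorem antiKaehler_biinvariant_of_nabla_comm
    (V : Type*) [LieRing V] [LieAlgebra ℝ V]
    (B : V →ₗ[ℝ] V →ₗ[ℝ] ℝ)
    (hsymm : ∀ X Y, B X Y = B Y X)
    (hnd : ∀ X, (∀ Y, B X Y = 0) → X = 0)
    (J : V →ₗ[ℝ] V) (hJ2 : ∀ X, J (J X) = -X)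
    (hJB : ∀ X Y, B (J X) (J Y) = - B X Y)
    (nabla : V →ₗ[ℝ] V →ₗ[ℝ] V)
    (hKoszul : ∀ X Y Z, 2 * B (nabla X Y) Z
        = B ⁅X, Y⁆ Z - B ⁅Y, Z⁆ X + B ⁅Z, X⁆ Y)
    (hyp : ∀ X Y, nabla (J X) Y = J (nabla X Y)) :
    (∀ X Y, nabla X (J Y) = J (nabla X Y)) ∧
    (∀ X Y, ⁅J X, Y⁆ = J ⁅X, Y⁆) := by
  -- B(JU, W) = B(U, JW)
  have hBJ : ∀ U W : V, B (J U) W = B U (J W) := by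
    intro U W
    have h := hJB (J U) W
    rw [hJ2] at h
    simp only [map_neg, LinearMap.neg_apply] at h
    linarith
  -- skew-symmetry of bracket inside B
  have hskew : ∀ U W T : V, B ⁅U, W⁆ T = - B ⁅W, U⁆ T := by
    intro U W T
    have h : ⁅U, W⁆ = -⁅W, U⁆ := by rw [← lie_skew W U, neg_neg]
    rw [h, map_neg, LinearMap.neg_apply]
  -- key identity from Koszul + hypothesis
  have hE : ∀ X Y Z : V, B ⁅J X, Y⁆ Z - B ⁅Y, Z⁆ (J X) + B ⁅Z, J X⁆ Y
      = B ⁅X, Y⁆ (J Z) - B ⁅Y, J Z⁆ X + B ⁅J Z, X⁆ Y := by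
    intro X Y Z
    have h1 := hKoszul (J X) Y Z
    have h2 := hKoszul X Y (J Z)
    rw [hyp] at h1
    have h3 : B (J (nabla X Y)) Z = B (nabla X Y) (J Z) := hBJ _ _
    linarith
  -- the trilinear obstruction
  set f : V → V → V → ℝ := fun X Y Z => B ⁅J X, Y⁆ Z - B ⁅X, Y⁆ (J Z) with hf
  have fI : ∀ X Y Z : V, f X Y Z - f Z Y X - f X Z Y - f Z X Y = 0 := by
    intro X Y Z
    have h := hE X Y Z
    have a1 : B ⁅Y, Z⁆ (J X) = - B ⁅Z, Y⁆ (J X) := hskew _ _ _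
    have a2 : B ⁅Z, J X⁆ Y = - B ⁅J X, Z⁆ Y := hskew _ _ _
    have a3 : B ⁅Y, J Z⁆ X = - B ⁅J Z, Y⁆ X := hskew _ _ _
    have a4 : B ⁅Z, X⁆ (J Y) = - B ⁅X, Z⁆ (J Y) := hskew _ _ _
    simp only [hf]
    linarith
  have fzero : ∀ X Y Z : V, f X Y Z = 0 := by
    intro X Y Z
    linarith [fI X Y Z, fI Z Y X, fI Y X Z, fI Z X Y, fI X Z Y, fI Y Z X]
  -- bi-invariance of J
  have hbi : ∀ X Y : V, ⁅J X, Y⁆ = J ⁅X, Y⁆ := by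
    intro X Y
    have h : ∀ Z, B (⁅J X, Y⁆ - J ⁅X, Y⁆) Z = 0 := by
      intro Z
      have h0 := fzero X Y Z
      have h1 : B (J ⁅X, Y⁆) Z = B ⁅X, Y⁆ (J Z) := hBJ _ _
      simp only [hf] at h0
      simp only [map_sub, LinearMap.sub_apply]
      linarith
    have := hnd _ h
    rwa [sub_eq_zero] at this
  refine ⟨?_, hbi⟩
  -- anti-Kähler
  intro X Y
  have h : ∀ Z, B (nabla X (J Y) - J (nabla X Y)) Z = 0 := by
    intro Z
    have h1 := hKoszul X (J Y) Z
    have h2 := hKoszul X Y (J Z)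
    have e0 : B (J (nabla X Y)) Z = B (nabla X Y) (J Z) := hBJ _ _
    have hlieJ : ∀ U W : V, ⁅U, J W⁆ = J ⁅U, W⁆ := by
      intro U W
      rw [← lie_skew U (J W), hbi W U, ← lie_skew W U, map_neg, neg_neg]
    have e1 : B ⁅X, J Y⁆ Z = B ⁅X, Y⁆ (J Z) := by
      rw [hlieJ X Y, hBJ]
    have e2 : B ⁅J Y, Z⁆ X = B ⁅Y, J Z⁆ X := by
      rw [hbi Y Z, hlieJ Y Z]
    have e3 : B ⁅Z, X⁆ (J Y) = B ⁅J Z, X⁆ Y := by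
      rw [hbi Z X, hBJ]
    simp only [map_sub, LinearMap.sub_apply]
    linarith
  have := hnd _ h
  rwa [sub_eq_zero] at this
end

section
/- Let 𝔤 be a Lie algebra with inner product ⟨·,·⟩ and complex structure J satisfying J² = -Id and ⟨JX,JY⟩ = -⟨X,Y⟩ (left invariant almost anti-Hermitian structure), and suppose the structure is anti-Kähler (∇J = 0 for the Levi-Civita connection ∇) with J abelian ([JX,JY] = [X,Y]). Then ∇_{JX}Y = -J∇_X Y for all X,Y ∈ 𝔤. -/
/-- If a left invariant anti-Kähler structure (`∇_X (JY) = J ∇_X Y` for the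
Koszul Levi-Civita connection) has an abelian complex structure
(`[JX,JY] = [X,Y]`), then `∇_{JX} Y = -J ∇_X Y`. -/
theorem nabla_anticomm_of_antiKaehler_abelian
    (V : Type*) [LieRing V] [LieAlgebra ℝ V]
    (B : V →ₗ[ℝ] V →ₗ[ℝ] ℝ)
    (hsymm : ∀ X Y, B X Y = B Y X)
    (hnd : ∀ X, (∀ Y, B X Y = 0) → X = 0)
    (J : V →ₗ[ℝ] V) (hJ2 : ∀ X, J (J X) = -X)
    (hJB : ∀ X Y, B (J X) (J Y) = - B X Y)
    (nabla : V →ₗ[ℝ] V →ₗ[ℝ] V)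
    (hKoszul : ∀ X Y Z, 2 * B (nabla X Y) Z
        = B ⁅X, Y⁆ Z - B ⁅Y, Z⁆ X + B ⁅Z, X⁆ Y)
    (hAK : ∀ X Y, nabla X (J Y) = J (nabla X Y))
    (habel : ∀ X Y, ⁅J X, J Y⁆ = ⁅X, Y⁆) :
    ∀ X Y, nabla (J X) Y = - J (nabla X Y) := by
  -- skew-symmetry of the bracket inside B
  have sk : ∀ A C D : V, B ⁅A, C⁆ D = - B ⁅C, A⁆ D := by
    intro A C D
    rw [← lie_skew A C, map_neg, LinearMap.neg_apply]
  -- move J across B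
  have L3 : ∀ A Z : V, B (J A) Z = B A (J Z) := by
    intro A Z
    have h := hJB A (J Z)
    rw [hJ2] at h
    simpa [neg_eq_iff_eq_neg] using h
  -- metric compatibility
  have L1 : ∀ X Y Z : V, B (nabla X Y) Z = - B (nabla X Z) Y := by
    intro X Y Z
    have h1 := hKoszul X Y Z
    have h2 := hKoszul X Z Y
    have s1 := sk Y Z X
    have s2 := sk Z X Y
    have s3 := sk X Y Z
    linarith
  -- torsion-freeness at the level of B
  have L2 : ∀ X Y Z : V, B (nabla X Y) Z - B (nabla Y X) Z = B ⁅X, Y⁆ Z := by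
    intro X Y Z
    have h1 := hKoszul X Y Z
    have h2 := hKoszul Y X Z
    have s3 := sk Y X Z
    have s1 := sk X Z Y
    have s2 := sk Z Y X
    linarith
  -- the key trilinear quantity
  set α : V → V → V → ℝ := fun X Y Z => B (nabla (J X) Y) Z + B (J (nabla X Y)) Z
    with hα
  -- abelian J implies ⁅J Y, X⁆ = ⁅J X, Y⁆
  have hbr : ∀ X Y : V, ⁅J Y, X⁆ = ⁅J X, Y⁆ := by
    intro X Y
    have h := habel Y (J X)
    rw [hJ2] at h
    have h2 : -⁅J Y, X⁆ = ⁅Y, J X⁆ := by simpa using h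
    have h3 : ⁅J X, Y⁆ = ⁅J Y, X⁆ := by
      rw [← lie_skew (J X) Y, ← h2, neg_neg]
    exact h3.symm
  -- α is symmetric in the first two arguments
  have hsymXY : ∀ X Y Z, α X Y Z = α Y X Z := by
    intro X Y Z
    have e1 := L2 (J X) Y Z
    have e2 := L2 X (J Y) Z
    have e3 : B ⁅X, J Y⁆ Z = - B ⁅J X, Y⁆ Z := by
      rw [sk X (J Y), hbr X Y]
    have hA1 : B (J (nabla Y X)) Z = B (nabla Y (J X)) Z := by rw [hAK]
    have hA2 : B (J (nabla X Y)) Z = B (nabla X (J Y)) Z := by rw [hAK]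
    simp only [hα]
    linarith
  -- α is antisymmetric in the last two arguments
  have hasymYZ : ∀ X Y Z, α X Y Z = - α X Z Y := by
    intro X Y Z
    have e1 := L1 (J X) Y Z
    have e2 := L3 (nabla X Y) Z
    have e3 := L1 X Y (J Z)
    have e4 : B (nabla X (J Z)) Y = B (J (nabla X Z)) Y := by rw [hAK]
    simp only [hα]
    linarith
  -- hence α vanishes
  have hzero : ∀ X Y Z, α X Y Z = 0 := by
    intro X Y Z
    have c1 : α X Y Z = - α X Y Z := by
      calc α X Y Z = α Y X Z := hsymXY X Y Z
        _ = - α Y Z X := hasymYZ Y X Z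
        _ = - α Z Y X := by rw [hsymXY Y Z X]
        _ = α Z X Y := by rw [hasymYZ Z Y X, neg_neg]
        _ = α X Z Y := hsymXY Z X Y
        _ = - α X Y Z := hasymYZ X Z Y
    linarith
  intro X Y
  have key : nabla (J X) Y + J (nabla X Y) = 0 := by
    apply hnd
    intro Z
    have h := hzero X Y Z
    simpa [hα, map_add, LinearMap.add_apply] using h
  exact eq_neg_of_add_eq_zero_left key
end

section
/- Let 𝔤 be a Lie algebra with anti-Kähler structure (⟨·,·⟩, J) where J is bi-invariant ([JX,Y] = J[X,Y]). Then ∇_{JX}Y = J∇_X Y for all X,Y ∈ 𝔤, where ∇ is the Levi-Civita connection. -/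
/-- If a left invariant anti-Kähler structure (Koszul Levi-Civita connection)
has a bi-invariant complex structure (`[JX,Y] = J[X,Y]`), then
`∇_{JX} Y = J ∇_X Y`. -/
theorem nabla_comm_of_antiKaehler_biinvariant
    (V : Type*) [LieRing V] [LieAlgebra ℝ V]
    (B : V →ₗ[ℝ] V →ₗ[ℝ] ℝ)
    (hsymm : ∀ X Y, B X Y = B Y X)
    (hnd : ∀ X, (∀ Y, B X Y = 0) → X = 0)
    (J : V →ₗ[ℝ] V) (hJ2 : ∀ X, J (J X) = -X)
    (hJB : ∀ X Y, B (J X) (J Y) = - B X Y)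
    (nabla : V →ₗ[ℝ] V →ₗ[ℝ] V)
    (hKoszul : ∀ X Y Z, 2 * B (nabla X Y) Z
        = B ⁅X, Y⁆ Z - B ⁅Y, Z⁆ X + B ⁅Z, X⁆ Y)
    (hAK : ∀ X Y, nabla X (J Y) = J (nabla X Y))
    (hbi : ∀ X Y, ⁅J X, Y⁆ = J ⁅X, Y⁆) :
    ∀ X Y, nabla (J X) Y = J (nabla X Y) := by
  have key : ∀ W Z : V, B (J W) Z = B W (J Z) := by
    intro W Z
    have h := hJB W (J Z)
    rw [hJ2] at h
    simpa using h
  have hbi' : ∀ X Y : V, ⁅X, J Y⁆ = J ⁅X, Y⁆ := by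
    intro X Y
    calc ⁅X, J Y⁆ = -⁅J Y, X⁆ := by rw [lie_skew]
      _ = -(J ⁅Y, X⁆) := by rw [hbi]
      _ = J (-⁅Y, X⁆) := (map_neg J _).symm
      _ = J ⁅X, Y⁆ := by rw [lie_skew]
  intro X Y
  have h0 : ∀ Z, B (nabla (J X) Y - J (nabla X Y)) Z = 0 := by
    intro Z
    have h1 := hKoszul (J X) Y Z
    have h2 := hKoszul X Y (J Z)
    rw [hbi X Y, key ⁅X, Y⁆ Z] at h1
    rw [hbi' Y Z, key ⁅Y, Z⁆ X] at h2
    have e3 : ⁅Z, J X⁆ = ⁅(J Z), X⁆ := by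
      rw [hbi Z X, hbi' Z X]
    rw [e3] at h1
    have eJ : B (J (nabla X Y)) Z = B (nabla X Y) (J Z) := key _ _
    have hB : B (nabla (J X) Y - J (nabla X Y)) Z
        = B (nabla (J X) Y) Z - B (J (nabla X Y)) Z := by
      simp [map_sub]
    rw [hB, eJ]
    linarith
  have h := hnd _ h0
  exact sub_eq_zero.mp h
end

section
/- Let 𝔤 be a Lie algebra with a nondegenerate symmetric bilinear form ⟨·,·⟩ and a bi-invariant complex structure J, i.e. J² = -Id, [JX,Y] = J[X,Y], and ⟨JX,JY⟩ = -⟨X,Y⟩. Then the Levi-Civita connection ∇ defined by the Koszul formula satisfies ∇_X(JY) = J(∇_X Y) for all X,Y ∈ 𝔤; i.e. the corresponding left invariant almost anti-Hermitian structure on any Lie group with Lie algebra 𝔤 is anti-Kähler. -/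
/-- If `J` is a bi-invariant complex structure on a Lie algebra with an
anti-Hermitian inner product, then the Koszul Levi-Civita connection
satisfies `∇_X (JY) = J ∇_X Y`; i.e. any left invariant almost
anti-Hermitian structure with bi-invariant `J` is anti-Kähler. -/
theorem antiKaehler_of_biinvariant
    (V : Type*) [LieRing V] [LieAlgebra ℝ V]
    (B : V →ₗ[ℝ] V →ₗ[ℝ] ℝ)
    (hsymm : ∀ X Y, B X Y = B Y X)
    (hnd : ∀ X, (∀ Y, B X Y = 0) → X = 0)
    (J : V →ₗ[ℝ] V) (hJ2 : ∀ X, J (J X) = -X)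
    (hJB : ∀ X Y, B (J X) (J Y) = - B X Y)
    (nabla : V →ₗ[ℝ] V →ₗ[ℝ] V)
    (hKoszul : ∀ X Y Z, 2 * B (nabla X Y) Z
        = B ⁅X, Y⁆ Z - B ⁅Y, Z⁆ X + B ⁅Z, X⁆ Y)
    (hbi : ∀ X Y, ⁅J X, Y⁆ = J ⁅X, Y⁆) :
    ∀ X Y, nabla X (J Y) = J (nabla X Y) := by
  have hJswap : ∀ a b, B (J a) b = B a (J b) := by
    intro a b
    have h := hJB a (J b)
    rw [hJ2] at h
    simpa using h
  have hbr : ∀ (a b : V), ⁅a, J b⁆ = J ⁅a, b⁆ := by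
    intro a b
    rw [← neg_neg ⁅a, J b⁆, lie_skew, hbi, ← lie_skew a b, map_neg]
  intro X Y
  have key : ∀ Z, B (nabla X (J Y)) Z = B (J (nabla X Y)) Z := by
    intro Z
    have h1 := hKoszul X (J Y) Z
    have h2 := hKoszul X Y (J Z)
    rw [hbr, hbi, hJswap, hJswap] at h1
    rw [hbr, hbi, hJswap] at h2
    rw [hJswap]
    -- h1 third term: B ⁅Z,X⁆ (J Y) vs h2 third: B (J ⁅Z,X⁆) Y
    rw [show B ⁅Z, X⁆ (J Y) = B (J ⁅Z, X⁆) Y from (hJswap _ _).symm] at h1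
    linarith
  have : ∀ Z, B (nabla X (J Y) - J (nabla X Y)) Z = 0 := by
    intro Z
    rw [map_sub, LinearMap.sub_apply, key, sub_self]
  exact sub_eq_zero.mp (hnd _ this)
end

section
/- Let 𝔤 be a Lie algebra with an anti-Kähler structure (⟨·,·⟩, J) where J is an abelian complex structure. Then the Levi-Civita connection is given explicitly by ∇_X Y = ½([X,Y] - J[X,JY]) for all X,Y ∈ 𝔤. -/
/-- For an anti-Kähler Lie algebra structure with abelian complex structure,
the Levi-Civita connection is `∇_X Y = ½([X,Y] - J[X,JY])`. -/
theorem nabla_formula_of_antiKaehler_abelian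
    (V : Type*) [LieRing V] [LieAlgebra ℝ V]
    (B : V →ₗ[ℝ] V →ₗ[ℝ] ℝ)
    (hsymm : ∀ X Y, B X Y = B Y X)
    (hnd : ∀ X, (∀ Y, B X Y = 0) → X = 0)
    (J : V →ₗ[ℝ] V) (hJ2 : ∀ X, J (J X) = -X)
    (hJB : ∀ X Y, B (J X) (J Y) = - B X Y)
    (nabla : V →ₗ[ℝ] V →ₗ[ℝ] V)
    (hKoszul : ∀ X Y Z, 2 * B (nabla X Y) Z
        = B ⁅X, Y⁆ Z - B ⁅Y, Z⁆ X + B ⁅Z, X⁆ Y)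
    (hAK : ∀ X Y, nabla X (J Y) = J (nabla X Y))
    (habel : ∀ X Y, ⁅J X, J Y⁆ = ⁅X, Y⁆) :
    ∀ X Y, nabla X Y = (1/2 : ℝ) • (⁅X, Y⁆ - J ⁅X, J Y⁆) := by
  -- move J across B
  have hBJ' : ∀ a b, B (J a) b = B a (J b) := by
    intro a b
    have h := hJB a (J b)
    rw [hJ2] at h
    simpa using h
  -- move J across brackets (abelian)
  have hJb : ∀ a b, ⁅J a, b⁆ = -⁅a, J b⁆ := by
    intro a b
    rw [← habel a (J b), hJ2, lie_neg, neg_neg]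
  -- the master anti-Kähler Koszul identity
  have hM : ∀ u v w, B ⁅u, J v⁆ w - B ⁅J v, w⁆ u + B ⁅w, u⁆ (J v)
      = B ⁅u, v⁆ (J w) - B ⁅v, J w⁆ u + B ⁅J w, u⁆ v := by
    intro u v w
    have k1 := hKoszul u (J v) w
    have k2 := hKoszul u v (J w)
    have e : B (nabla u (J v)) w = B (nabla u v) (J w) := by
      rw [hAK, hBJ']
    linarith
  intro X Y
  have key : ∀ Z, B (nabla X Y - (1/2 : ℝ) • (⁅X, Y⁆ - J ⁅X, J Y⁆)) Z = 0 := by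
    intro Z
    -- bracket reordering lemmas
    have o1 : ⁅Y, X⁆ = -⁅X, Y⁆ := (lie_skew Y X).symm
    have o2 : ⁅Z, X⁆ = -⁅X, Z⁆ := (lie_skew Z X).symm
    have o3 : ⁅Z, Y⁆ = -⁅Y, Z⁆ := (lie_skew Z Y).symm
    have j1 : ⁅J X, Y⁆ = -⁅X, J Y⁆ := hJb X Y
    have j2 : ⁅Y, J X⁆ = ⁅X, J Y⁆ := by
      rw [← lie_skew, hJb, neg_neg]
    have j3 : ⁅J X, Z⁆ = -⁅X, J Z⁆ := hJb X Z
    have j4 : ⁅Z, J X⁆ = ⁅X, J Z⁆ := by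
      rw [← lie_skew, hJb, neg_neg]
    have j5 : ⁅J Y, Z⁆ = -⁅Y, J Z⁆ := hJb Y Z
    have j6 : ⁅Z, J Y⁆ = ⁅Y, J Z⁆ := by
      rw [← lie_skew, hJb, neg_neg]
    have j7 : ⁅J Z, X⁆ = -⁅X, J Z⁆ := by rw [hJb, j4]
    have j8 : ⁅J Z, Y⁆ = -⁅Y, J Z⁆ := by rw [hJb, j6]
    have h1 := hM X Y (J Z)
    have h2 := hM (J X) Y Z
    have h3 := hM Y X (J Z)
    have k := hKoszul X Y Z
    simp only [habel, hJ2, o1, o2, o3, j1, j2, j3, j4, j5, j6, j7, j8, lie_neg, neg_lie,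
      map_neg, LinearMap.neg_apply, neg_neg] at h1 h2 h3 k
    have expand : B (nabla X Y - (1/2 : ℝ) • (⁅X, Y⁆ - J ⁅X, J Y⁆)) Z
        = B (nabla X Y) Z - (1/2 : ℝ) * (B ⁅X, Y⁆ Z - B ⁅X, J Y⁆ (J Z)) := by
      have : B (J ⁅X, J Y⁆) Z = B ⁅X, J Y⁆ (J Z) := hBJ' _ _
      simp only [map_sub, map_smul, LinearMap.sub_apply, LinearMap.smul_apply,
        smul_eq_mul, this]
    rw [expand]
    linarith
  have h0 := hnd _ key
  rw [sub_eq_zero] at h0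
  exact h0
end

section
/- Let 𝔤 be a 2n-dimensional Lie algebra admitting an anti-Kähler structure (⟨·,·⟩, J) with J abelian. Then 𝔤 is unimodular: Tr(ad_X) = 0 for all X ∈ 𝔤. -/
/-- A `2n`-dimensional Lie algebra admitting an anti-Kähler structure with
abelian complex structure is unimodular: `Tr(ad_X) = 0` for all `X`. -/
theorem unimodular_of_antiKaehler_abelian
    (V : Type*) [LieRing V] [LieAlgebra ℝ V]
    (B : V →ₗ[ℝ] V →ₗ[ℝ] ℝ)
    (hsymm : ∀ X Y, B X Y = B Y X)
    (hnd : ∀ X, (∀ Y, B X Y = 0) → X = 0)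
    (J : V →ₗ[ℝ] V) (hJ2 : ∀ X, J (J X) = -X)
    (hJB : ∀ X Y, B (J X) (J Y) = - B X Y)
    (nabla : V →ₗ[ℝ] V →ₗ[ℝ] V)
    (hKoszul : ∀ X Y Z, 2 * B (nabla X Y) Z
        = B ⁅X, Y⁆ Z - B ⁅Y, Z⁆ X + B ⁅Z, X⁆ Y)
    (hAK : ∀ X Y, nabla X (J Y) = J (nabla X Y))
    (habel : ∀ X Y, ⁅J X, J Y⁆ = ⁅X, Y⁆)
    [FiniteDimensional ℝ V] (n : ℕ) (hdim : Module.finrank ℝ V = 2 * n) :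
    ∀ X : V, LinearMap.trace ℝ V (LieAlgebra.ad ℝ V X) = 0 := by
  classical
  -- basic identities
  have habJ : ∀ X Y : V, ⁅X, J Y⁆ = ⁅Y, J X⁆ := by
    intro X Y
    have h := habel (J X) Y
    rw [hJ2, neg_lie] at h
    calc ⁅X, J Y⁆ = -⁅J X, Y⁆ := by rw [← h, neg_neg]
      _ = ⁅Y, J X⁆ := lie_skew Y (J X)
  have hBJ : ∀ u w : V, B (J u) w = B u (J w) := by
    intro u w
    have h := hJB u (J w)
    rw [hJ2] at h
    simp only [map_neg, neg_neg] at h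
    linarith
  have hskew : ∀ (u v : V) (w : V), B ⁅u, v⁆ w = -B ⁅v, u⁆ w := by
    intro u v w
    rw [← lie_skew v u]
    simp only [map_neg, LinearMap.neg_apply, neg_neg]
  -- master identity in canonical form
  have Kc : ∀ X Y Z : V, B ⁅X, J Y⁆ Z + 2 * B ⁅Y, J Z⁆ X + B ⁅Z, J X⁆ Y
      = B ⁅X, Y⁆ (J Z) - B ⁅Z, X⁆ (J Y) := by
    intro X Y Z
    have h1 := hKoszul X (J Y) Z
    have h2 := hKoszul X Y (J Z)
    rw [hAK, hBJ] at h1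
    have e1 : B ⁅J Y, Z⁆ X = -B ⁅Y, J Z⁆ X := by
      rw [hskew (J Y) Z, habJ Z Y]
    have e2 : B ⁅J Z, X⁆ Y = -B ⁅Z, J X⁆ Y := by
      rw [hskew (J Z) X, habJ X Z]
    linarith [h1, h2, e1, e2]
  -- key identity
  have key : ∀ X Y Z : V, B ⁅X, J Y⁆ Z = B ⁅Z, X⁆ (J Y) - B ⁅Y, Z⁆ (J X) := by
    intro X Y Z
    have h1 := Kc X Y Z
    have h2 := Kc Y Z X
    have h3 := Kc Z X Y
    have s1 : B ⁅Y, X⁆ (J Z) = -B ⁅X, Y⁆ (J Z) := hskew Y X (J Z)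
    have s2 : B ⁅X, Z⁆ (J Y) = -B ⁅Z, X⁆ (J Y) := hskew X Z (J Y)
    have m1 : B ⁅Y, J X⁆ Z = B ⁅X, J Y⁆ Z := by rw [habJ Y X]
    have m2 : B ⁅Z, J Y⁆ X = B ⁅Y, J Z⁆ X := by rw [habJ Z Y]
    have m3 : B ⁅X, J Z⁆ Y = B ⁅Z, J X⁆ Y := by rw [habJ X Z]
    linarith
  -- polarized invariance identity
  have spol : ∀ X Y Z : V, B ⁅X, Y⁆ Z + B ⁅X, Z⁆ Y
      = B ⁅X, J Y⁆ (J Z) + B ⁅X, J Z⁆ (J Y) := by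
    intro X Y Z
    have h1 := key X Y (J Z)
    have h2 := key X Z (J Y)
    have h3 := key X (J Y) Z
    rw [hJ2] at h3
    have e1 : B ⁅J Z, X⁆ (J Y) = -B ⁅X, J Z⁆ (J Y) := hskew (J Z) X (J Y)
    have e2 : B ⁅J Y, X⁆ (J Z) = -B ⁅X, J Y⁆ (J Z) := hskew (J Y) X (J Z)
    have e3 : B ⁅Z, J Y⁆ (J X) = B ⁅Y, J Z⁆ (J X) := by rw [habJ Z Y]
    have e4 : B ⁅J Y, Z⁆ (J X) = -B ⁅Y, J Z⁆ (J X) := by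
      rw [hskew (J Y) Z, habJ Z Y]
    have e6 : B ⁅X, -Y⁆ Z = -B ⁅X, Y⁆ Z := by
      simp only [lie_neg, map_neg, LinearMap.neg_apply]
    have e7 : B ⁅Z, X⁆ (-Y) = -B ⁅Z, X⁆ Y := by
      simp only [map_neg]
    have e8 : B ⁅Z, X⁆ Y = -B ⁅X, Z⁆ Y := hskew Z X Y
    rw [e6, e7] at h3
    linarith
  intro X
  -- J as a linear equivalence
  have hJinj : Function.Injective J := by
    intro u v huv
    have h : J (J u) = J (J v) := by rw [huv]
    rw [hJ2, hJ2] at h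
    exact neg_injective h
  let Je : V ≃ₗ[ℝ] V := LinearEquiv.ofBijective J
    ⟨hJinj, LinearMap.surjective_of_injective hJinj⟩
  have hJe : ∀ v, Je v = J v := fun v => rfl
  -- nondegeneracy
  have hB : LinearMap.BilinForm.Nondegenerate B := ⟨fun x hx => hnd x hx, fun y hy => hnd y (fun x => by rw [hsymm]; exact hy x)⟩
  set b := Module.finBasis ℝ V with hb
  set d := LinearMap.BilinForm.dualBasis B hB b with hd
  -- general trace formula for a basis with an explicit B-dual family
  have trace_formula : ∀ (c : Module.Basis (Fin (Module.finrank ℝ V)) ℝ V)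
      (e : Fin (Module.finrank ℝ V) → V),
      (∀ i j, B (e i) (c j) = if j = i then 1 else 0) →
      ∀ f : V →ₗ[ℝ] V, LinearMap.trace ℝ V f = ∑ i, B (e i) (f (c i)) := by
    intro c e he f
    have hcoord : ∀ i, B (e i) = c.coord i := by
      intro i
      apply c.ext
      intro j
      rw [he i j, Module.Basis.coord_apply, Module.Basis.repr_self, Finsupp.single_apply]
    rw [LinearMap.trace_eq_matrix_trace ℝ c, Matrix.trace]
    refine Finset.sum_congr rfl fun i _ => ?_
    rw [Matrix.diag_apply, LinearMap.toMatrix_apply, hcoord i, Module.Basis.coord_apply]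
  have hd1 : ∀ i j, B (d i) (b j) = if j = i then 1 else 0 := fun i j =>
    LinearMap.BilinForm.apply_dualBasis_left (B := B) hB b i j
  have hd2 : ∀ i j, B (b i) (d j) = if j = i then 1 else 0 := by
    intro i j
    rw [hsymm, hd1 j i]
    simp [eq_comm]
  -- bases transported by J
  let c1 : Module.Basis (Fin (Module.finrank ℝ V)) ℝ V := b.map Je
  let c2 : Module.Basis (Fin (Module.finrank ℝ V)) ℝ V := d.map Je
  have hc1 : ∀ i, c1 i = J (b i) := fun i => by simp [c1, Module.Basis.map_apply, hJe]
  have hc2 : ∀ i, c2 i = J (d i) := fun i => by simp [c2, Module.Basis.map_apply, hJe]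
  have hp1 : ∀ i j, B (-J (d i)) (c1 j) = if j = i then 1 else 0 := by
    intro i j
    rw [hc1]
    simp only [map_neg, LinearMap.neg_apply, hJB, neg_neg]
    exact hd1 i j
  have hp2 : ∀ i j, B (-J (b i)) (c2 j) = if j = i then 1 else 0 := by
    intro i j
    rw [hc2]
    simp only [map_neg, LinearMap.neg_apply, hJB, neg_neg]
    exact hd2 i j
  set f := LieAlgebra.ad ℝ V X with hf
  have hfv : ∀ v, f v = ⁅X, v⁆ := fun v => rfl
  have t1 := trace_formula b d hd1 f
  have t2 := trace_formula d b hd2 f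
  have t3 := trace_formula c1 (fun i => -J (d i)) hp1 f
  have t4 := trace_formula c2 (fun i => -J (b i)) hp2 f
  simp only [hfv, hc1, hc2] at t1 t2 t3 t4
  have hsum : ∀ i, B (d i) ⁅X, b i⁆ + B (b i) ⁅X, d i⁆
      = -B (-J (d i)) ⁅X, J (b i)⁆ - B (-J (b i)) ⁅X, J (d i)⁆ := by
    intro i
    have h := spol X (b i) (d i)
    have e1 : B (d i) ⁅X, b i⁆ = B ⁅X, b i⁆ (d i) := hsymm _ _
    have e2 : B (b i) ⁅X, d i⁆ = B ⁅X, d i⁆ (b i) := hsymm _ _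
    have e3 : B (-J (d i)) ⁅X, J (b i)⁆ = -B ⁅X, J (b i)⁆ (J (d i)) := by
      simp only [map_neg, LinearMap.neg_apply]
      rw [hsymm]
    have e4 : B (-J (b i)) ⁅X, J (d i)⁆ = -B ⁅X, J (d i)⁆ (J (b i)) := by
      simp only [map_neg, LinearMap.neg_apply]
      rw [hsymm]
    linarith
  have hsums := Finset.sum_congr rfl (fun i (_ : i ∈ Finset.univ) => hsum i)
  rw [Finset.sum_add_distrib] at hsums
  rw [Finset.sum_sub_distrib] at hsums
  rw [Finset.sum_neg_distrib] at hsums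
  linarith [t1, t2, t3, t4, hsums]
end

section
/- Let 𝔤 be a unimodular Lie algebra with a complex structure J (J² = -Id). If Tr(ad_{JX}) = 0 for all X ∈ 𝔤 (e.g. 𝔤 unimodular), then the Killing form B satisfies B(JX,Y) = B(X,JY) for all X,Y, provided J is abelian ([JX,JY] = [X,Y]). Consequently B(JX,JY) = -B(X,Y). -/
/-- On a unimodular Lie algebra (`Tr(ad_X) = 0` for all `X`, hence in
particular `Tr(ad_{JX}) = 0`) with an abelian complex structure `J`
(`J² = -Id`, `[JX,JY] = [X,Y]`), the Killing form `B` satisfies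
`B(JX,Y) = B(X,JY)`, and consequently `B(JX,JY) = -B(X,Y)`. -/
theorem killingForm_J_symmetric_of_unimodular_abelian
    (V : Type*) [LieRing V] [LieAlgebra ℝ V] [FiniteDimensional ℝ V]
    (J : V →ₗ[ℝ] V) (hJ2 : ∀ X, J (J X) = -X)
    (habel : ∀ X Y, ⁅J X, J Y⁆ = ⁅X, Y⁆)
    (hunimod : ∀ X : V, LinearMap.trace ℝ V (LieAlgebra.ad ℝ V X) = 0) :
    (∀ X Y : V, killingForm ℝ V (J X) Y = killingForm ℝ V X (J Y)) ∧
    (∀ X Y : V, killingForm ℝ V (J X) (J Y) = - killingForm ℝ V X Y) := by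
  set ad := LieAlgebra.ad ℝ V with had_def
  -- ⁅J X, Y⁆ = -⁅X, J Y⁆
  have hkey : ∀ X Y : V, ⁅J X, Y⁆ = -⁅X, J Y⁆ := by
    intro X Y
    have h := habel X (J Y)
    rw [hJ2 Y, lie_neg] at h
    exact neg_eq_iff_eq_neg.mp h
  -- ad (J X) = -(ad X ∘ₗ J)
  have hadJ : ∀ X : V, ad (J X) = -(ad X ∘ₗ J) := by
    intro X
    ext Z
    simp only [had_def, LinearMap.neg_apply, LinearMap.comp_apply, LieAlgebra.ad_apply]
    exact hkey X Z
  -- ad X ∘ₗ J = - ad (J X)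
  have hadJ' : ∀ X : V, ad X ∘ₗ J = -(ad (J X)) := by
    intro X; rw [hadJ X, neg_neg]
  have hjac : ∀ X Y : V, ad ⁅X, Y⁆ = ad X ∘ₗ ad Y - ad Y ∘ₗ ad X := by
    intro X Y
    ext Z
    simp [had_def, LieAlgebra.ad_apply, lie_lie]
  have part1 : ∀ X Y : V, killingForm ℝ V (J X) Y = killingForm ℝ V X (J Y) := by
    intro X Y
    rw [killingForm_apply_apply, killingForm_apply_apply, hadJ X, hadJ Y]
    rw [LinearMap.neg_comp, LinearMap.comp_neg, map_neg, map_neg, neg_inj]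
    have hcyc : LinearMap.trace ℝ V ((ad X ∘ₗ J) ∘ₗ ad Y)
        = LinearMap.trace ℝ V (ad Y ∘ₗ (ad X ∘ₗ J)) := by
      rw [LinearMap.trace_comp_comm']
    rw [hcyc, ← LinearMap.comp_assoc, ← LinearMap.comp_assoc]
    have : ad Y ∘ₗ ad X = ad X ∘ₗ ad Y - ad ⁅X, Y⁆ := by
      rw [hjac X Y]; abel
    rw [this, LinearMap.sub_comp, map_sub, hadJ' ⁅X, Y⁆, map_neg,
      hunimod (J ⁅X, Y⁆), neg_zero, sub_zero, LinearMap.comp_assoc]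
  refine ⟨part1, fun X Y => ?_⟩
  rw [part1 X (J Y), hJ2 Y, map_neg]
end

section
/- Let 𝔤 be a Lie algebra with anti-Kähler structure (⟨·,·⟩, J), J abelian. Then the Levi-Civita connection ∇ satisfies ∇_X∇_Y Z = ∇_Y∇_X Z for all X,Y,Z ∈ 𝔤, where ∇_X Y = ½([X,Y] - J[X,JY]). -/
/-- For an anti-Kähler Lie algebra structure with abelian complex structure,
the Levi-Civita connection satisfies `∇_X ∇_Y Z = ∇_Y ∇_X Z`. -/
theorem nabla_second_derivatives_commute
    (V : Type*) [LieRing V] [LieAlgebra ℝ V]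
    (B : V →ₗ[ℝ] V →ₗ[ℝ] ℝ)
    (hsymm : ∀ X Y, B X Y = B Y X)
    (hnd : ∀ X, (∀ Y, B X Y = 0) → X = 0)
    (J : V →ₗ[ℝ] V) (hJ2 : ∀ X, J (J X) = -X)
    (hJB : ∀ X Y, B (J X) (J Y) = - B X Y)
    (nabla : V →ₗ[ℝ] V →ₗ[ℝ] V)
    (hKoszul : ∀ X Y Z, 2 * B (nabla X Y) Z
        = B ⁅X, Y⁆ Z - B ⁅Y, Z⁆ X + B ⁅Z, X⁆ Y)
    (hAK : ∀ X Y, nabla X (J Y) = J (nabla X Y))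
    (habel : ∀ X Y, ⁅J X, J Y⁆ = ⁅X, Y⁆) :
    ∀ X Y Z, nabla X (nabla Y Z) = nabla Y (nabla X Z) := by
  -- `B (J X) Y = B X (J Y)`
  have bJ : ∀ X Y, B (J X) Y = B X (J Y) := by
    intro X Y
    have h := hJB X (J Y)
    rw [hJ2, map_neg] at h
    linarith
  -- abelian complex structure: `⁅J X, Y⁆ = -⁅X, J Y⁆`
  have brJ : ∀ X Y, ⁅J X, Y⁆ = -⁅X, J Y⁆ := by
    intro X Y
    have h := habel X (J Y)
    rw [hJ2, lie_neg] at h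
    rw [← h, neg_neg]
  have brJ' : ∀ X Y, ⁅X, J Y⁆ = -⁅J X, Y⁆ := by
    intro X Y
    rw [brJ, neg_neg]
  -- consequence of `hAK` and the Koszul formula
  have star : ∀ X Y Z,
      B ⁅X, J Y⁆ Z - B ⁅J Y, Z⁆ X + B ⁅Z, X⁆ (J Y)
        = B ⁅X, Y⁆ (J Z) - B ⁅Y, J Z⁆ X + B ⁅J Z, X⁆ Y := by
    intro X Y Z
    have k1 := hKoszul X (J Y) Z
    have k2 := hKoszul X Y (J Z)
    have e : B (nabla X (J Y)) Z = B (nabla X Y) (J Z) := by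
      rw [hAK, bJ]
    linarith
  -- the key identity
  have key : ∀ X Y Z,
      B ⁅X, J Y⁆ (J Z) = B ⁅Y, Z⁆ X - B ⁅Z, X⁆ Y := by
    intro X Y Z
    have hA1 := star X (J Y) Z
    have hA2 := star Y (J Z) X
    have hB := star (J X) Y Z
    simp only [hJ2, habel, brJ, lie_neg, neg_lie, map_neg, LinearMap.neg_apply,
      neg_neg] at hA1 hA2 hB
    linarith
  -- explicit formula for nabla
  have hform : ∀ X Y, (2:ℝ) • nabla X Y = ⁅X, Y⁆ - J ⁅X, J Y⁆ := by
    intro X Y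
    have h0 : ∀ Z, B ((2:ℝ) • nabla X Y - (⁅X, Y⁆ - J ⁅X, J Y⁆)) Z = 0 := by
      intro Z
      have hk := hKoszul X Y Z
      have hkey := key X Y Z
      have hJb : B (J ⁅X, J Y⁆) Z = B ⁅X, J Y⁆ (J Z) := bJ _ _
      simp only [map_sub, map_smul, LinearMap.sub_apply, LinearMap.smul_apply,
        smul_eq_mul]
      rw [hJb, hkey]
      linarith
    have h := hnd _ h0
    exact sub_eq_zero.mp h
  -- four times the second derivative, expanded
  have e4 : ∀ X Y Z, (4:ℝ) • nabla X (nabla Y Z)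
      = ⁅X, ⁅Y, Z⁆⁆ + ⁅J X, ⁅Y, J Z⁆⁆ + J ⁅J X, ⁅Y, Z⁆⁆ - J ⁅X, ⁅Y, J Z⁆⁆ := by
    intro X Y Z
    have step1 : (4:ℝ) • nabla X (nabla Y Z)
        = ⁅X, ⁅Y, Z⁆ - J ⁅Y, J Z⁆⁆ - J ⁅X, J (⁅Y, Z⁆ - J ⁅Y, J Z⁆)⁆ := by
      calc (4:ℝ) • nabla X (nabla Y Z)
          = (2:ℝ) • ((2:ℝ) • nabla X (nabla Y Z)) := by
            rw [smul_smul]; norm_num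
        _ = (2:ℝ) • (nabla X ((2:ℝ) • nabla Y Z)) := by rw [map_smul]
        _ = (2:ℝ) • (nabla X (⁅Y, Z⁆ - J ⁅Y, J Z⁆)) := by rw [hform Y Z]
        _ = ⁅X, ⁅Y, Z⁆ - J ⁅Y, J Z⁆⁆
              - J ⁅X, J (⁅Y, Z⁆ - J ⁅Y, J Z⁆)⁆ := hform X _
    rw [step1]
    have hU : J (⁅Y, Z⁆ - J ⁅Y, J Z⁆) = J ⁅Y, Z⁆ + ⁅Y, J Z⁆ := by
      rw [map_sub, hJ2, sub_neg_eq_add]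
    rw [hU, lie_sub, lie_add,
      show ⁅X, J ⁅Y, J Z⁆⁆ = -⁅J X, ⁅Y, J Z⁆⁆ from brJ' _ _,
      show ⁅X, J ⁅Y, Z⁆⁆ = -⁅J X, ⁅Y, Z⁆⁆ from brJ' _ _]
    simp only [map_add, map_neg, sub_neg_eq_add]
    abel
  -- the main bracket identity
  have main : ∀ X Y Z,
      ⁅X, ⁅Y, Z⁆⁆ + ⁅J X, ⁅Y, J Z⁆⁆ + J ⁅J X, ⁅Y, Z⁆⁆ - J ⁅X, ⁅Y, J Z⁆⁆
        = ⁅Y, ⁅X, Z⁆⁆ + ⁅J Y, ⁅X, J Z⁆⁆ + J ⁅J Y, ⁅X, Z⁆⁆ - J ⁅Y, ⁅X, J Z⁆⁆ := by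
    intro X Y Z
    have b1 : ⁅Y, J Z⁆ = -⁅J Y, Z⁆ := brJ' _ _
    have b2 : ⁅X, J Z⁆ = -⁅J X, Z⁆ := brJ' _ _
    have h1 : ⁅X, ⁅Y, Z⁆⁆ + ⁅J X, ⁅Y, J Z⁆⁆
        = ⁅Y, ⁅X, Z⁆⁆ + ⁅J Y, ⁅X, J Z⁆⁆ := by
      rw [b1, b2, lie_neg, lie_neg, ← sub_eq_add_neg, ← sub_eq_add_neg,
        sub_eq_sub_iff_sub_eq_sub, ← lie_lie, ← lie_lie, habel]
    have h2 : ⁅J X, ⁅Y, Z⁆⁆ - ⁅X, ⁅Y, J Z⁆⁆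
        = ⁅J Y, ⁅X, Z⁆⁆ - ⁅Y, ⁅X, J Z⁆⁆ := by
      rw [b1, b2, lie_neg, lie_neg, sub_neg_eq_add, sub_neg_eq_add]
      have l1 : ⁅J X, ⁅Y, Z⁆⁆ = ⁅⁅J X, Y⁆, Z⁆ + ⁅Y, ⁅J X, Z⁆⁆ := by
        rw [lie_lie]; abel
      have l2 : ⁅X, ⁅J Y, Z⁆⁆ = ⁅⁅X, J Y⁆, Z⁆ + ⁅J Y, ⁅X, Z⁆⁆ := by
        rw [lie_lie]; abel
      have l3 : ⁅⁅J X, Y⁆, Z⁆ = -⁅⁅X, J Y⁆, Z⁆ := by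
        rw [brJ, neg_lie]
      rw [l1, l2, l3]
      abel
    have h2' : J ⁅J X, ⁅Y, Z⁆⁆ - J ⁅X, ⁅Y, J Z⁆⁆
        = J ⁅J Y, ⁅X, Z⁆⁆ - J ⁅Y, ⁅X, J Z⁆⁆ := by
      rw [← map_sub, ← map_sub, h2]
    calc ⁅X, ⁅Y, Z⁆⁆ + ⁅J X, ⁅Y, J Z⁆⁆ + J ⁅J X, ⁅Y, Z⁆⁆ - J ⁅X, ⁅Y, J Z⁆⁆
        = (⁅X, ⁅Y, Z⁆⁆ + ⁅J X, ⁅Y, J Z⁆⁆)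
            + (J ⁅J X, ⁅Y, Z⁆⁆ - J ⁅X, ⁅Y, J Z⁆⁆) := by abel
      _ = (⁅Y, ⁅X, Z⁆⁆ + ⁅J Y, ⁅X, J Z⁆⁆)
            + (J ⁅J Y, ⁅X, Z⁆⁆ - J ⁅Y, ⁅X, J Z⁆⁆) := by rw [h1, h2']
      _ = _ := by abel
  -- conclude
  intro X Y Z
  have h4 : (4:ℝ) • nabla X (nabla Y Z) = (4:ℝ) • nabla Y (nabla X Z) := by
    rw [e4 X Y Z, e4 Y X Z]; exact main X Y Z
  exact smul_right_injective V (by norm_num : (4:ℝ) ≠ 0) h4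
end

section
/- Let 𝔤 be a Lie algebra with anti-Kähler structure (⟨·,·⟩, J) where J is abelian. Then the curvature R(X,Y)Z := ∇_X∇_Y Z - ∇_Y∇_X Z - ∇_{[X,Y]}Z vanishes identically; i.e. the associated left invariant pseudo-Riemannian metric is flat. Equivalently, with ∇_X Y = ½([X,Y] - J[X,JY]), one has ∇_{[X,Y]}Z = 0 for all X,Y,Z ∈ 𝔤. -/
/-- An anti-Kähler Lie algebra structure with abelian complex structure is
flat: the curvature `R(X,Y)Z = ∇_X ∇_Y Z - ∇_Y ∇_X Z - ∇_{[X,Y]} Z`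
vanishes identically (equivalently `∇_{[X,Y]} Z = 0` for all `X, Y, Z`). -/
theorem flat_of_antiKaehler_abelian
    (V : Type*) [LieRing V] [LieAlgebra ℝ V]
    (B : V →ₗ[ℝ] V →ₗ[ℝ] ℝ)
    (hsymm : ∀ X Y, B X Y = B Y X)
    (hnd : ∀ X, (∀ Y, B X Y = 0) → X = 0)
    (J : V →ₗ[ℝ] V) (hJ2 : ∀ X, J (J X) = -X)
    (hJB : ∀ X Y, B (J X) (J Y) = - B X Y)
    (nabla : V →ₗ[ℝ] V →ₗ[ℝ] V)
    (hKoszul : ∀ X Y Z, 2 * B (nabla X Y) Z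
        = B ⁅X, Y⁆ Z - B ⁅Y, Z⁆ X + B ⁅Z, X⁆ Y)
    (hAK : ∀ X Y, nabla X (J Y) = J (nabla X Y))
    (habel : ∀ X Y, ⁅J X, J Y⁆ = ⁅X, Y⁆) :
    (∀ X Y Z, nabla X (nabla Y Z) - nabla Y (nabla X Z) - nabla ⁅X, Y⁆ Z = 0) ∧
    (∀ X Y Z : V, nabla ⁅X, Y⁆ Z = 0) := by
  have bmove : ∀ u v : V, B (J u) v = B u (J v) := by
    intro u v
    have h := hJB u (J v)
    rw [hJ2] at h
    simpa using h
  have habel' : ∀ u v : V, ⁅u, J v⁆ = -⁅J u, v⁆ := by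
    intro u v
    have h := habel u (J v)
    rw [hJ2] at h
    simpa using h.symm
  have bneg : ∀ u v : V, B (-u) v = - B u v := by intro u v; simp
  have bswap : ∀ u v w : V, B ⁅u, v⁆ w = - B ⁅v, u⁆ w := by
    intro u v w
    rw [← lie_skew v u, bneg, neg_neg]
  have skew : ∀ a u v : V, B (nabla a u) v = - B u (nabla a v) := by
    intro a u v
    have h1 := hKoszul a u v
    have h2 := hKoszul a v u
    have l1 := bswap v u a
    have l2 := bswap u a v
    have l3 := bswap a v u
    have l4 := hsymm u (nabla a v)
    linarith
  have torsion : ∀ u v : V, nabla u v - nabla v u = ⁅u, v⁆ := by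
    intro u v
    have key : ∀ w, B (nabla u v - nabla v u - ⁅u, v⁆) w = 0 := by
      intro w
      have e : B (nabla u v - nabla v u - ⁅u, v⁆) w
          = B (nabla u v) w - B (nabla v u) w - B ⁅u, v⁆ w := by
        simp [map_sub, LinearMap.sub_apply]
      rw [e]
      linarith [hKoszul u v w, hKoszul v u w, bswap v u w, bswap w v u, bswap w u v]
    exact sub_eq_zero.mp (hnd _ key)
  have hI : ∀ a b c : V, B ⁅a, J b⁆ c - B ⁅J b, c⁆ a + B ⁅c, a⁆ (J b)
      = B ⁅a, b⁆ (J c) - B ⁅b, J c⁆ a + B ⁅J c, a⁆ b := by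
    intro a b c
    have h1 := hKoszul a (J b) c
    have h2 := hKoszul a b (J c)
    have h3 : B (nabla a (J b)) c = B (nabla a b) (J c) := by rw [hAK, bmove]
    linarith
  have keyG : ∀ a b c : V, B (J ⁅a, J b⁆) c = B ⁅b, c⁆ a - B ⁅c, a⁆ b := by
    intro a b c
    have A1 := hI (J a) b c
    rw [habel a b, habel c a, habel' c a, habel' b c] at A1
    simp only [bneg] at A1
    have A2 := hI (J b) c a
    rw [habel b c, habel a b, habel' a b, habel' c a] at A2
    simp only [bneg] at A2
    have A3 := hI (J c) a b
    rw [habel c a, habel b c, habel' b c, habel' a b] at A3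
    simp only [bneg] at A3
    rw [bmove, habel' a b]
    simp only [bneg]
    linarith
  have formula : ∀ a b : V, nabla a b = (2⁻¹ : ℝ) • (⁅a, b⁆ - J ⁅a, J b⁆) := by
    intro a b
    have key : ∀ w, B (nabla a b - (2⁻¹ : ℝ) • (⁅a, b⁆ - J ⁅a, J b⁆)) w = 0 := by
      intro w
      have e : B (nabla a b - (2⁻¹ : ℝ) • (⁅a, b⁆ - J ⁅a, J b⁆)) w
          = B (nabla a b) w - (2⁻¹ : ℝ) * (B ⁅a, b⁆ w - B (J ⁅a, J b⁆) w) := by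
        simp [map_sub, map_smul, LinearMap.sub_apply, LinearMap.smul_apply, smul_eq_mul]
      rw [e, keyG a b w]
      linarith [hKoszul a b w]
    exact sub_eq_zero.mp (hnd _ key)
  have nab2 : ∀ a u v : V, nabla a (nabla u v)
      = (4⁻¹ : ℝ) • (⁅a, ⁅u, v⁆⁆ + J ⁅J a, ⁅u, v⁆⁆ + J ⁅a, ⁅J u, v⁆⁆ - ⁅J a, ⁅J u, v⁆⁆) := by
    intro a u v
    rw [formula u v]
    simp only [map_smul, map_sub, hAK]
    rw [formula a ⁅u, v⁆, formula a ⁅u, J v⁆]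
    simp only [habel', map_neg, lie_neg, neg_lie, hJ2, neg_neg, smul_neg, smul_sub, smul_add,
      sub_neg_eq_add, map_add, map_smul, smul_smul]
    simp only [map_sub, map_neg, map_smul, hJ2, smul_neg, neg_neg, smul_smul]
    module
  have jac : ∀ x y z : V, ⁅⁅x, y⁆, z⁆ + ⁅⁅y, z⁆, x⁆ + ⁅⁅z, x⁆, y⁆ = 0 := by
    intro x y z
    simp only [lie_lie]
    rw [← lie_skew x z, ← lie_skew y x, ← lie_skew z y]
    simp only [lie_neg]
    linear_combination (norm := abel) (2 : ℤ) • lie_jacobi x y z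
  have A0 : ∀ a b c : V, nabla a (nabla b c) - nabla b (nabla a c) = 0 := by
    intro a b c
    rw [nab2 a b c, nab2 b a c]
    have e1 : ⁅a, ⁅b, c⁆⁆ - ⁅b, ⁅a, c⁆⁆ = ⁅⁅a, b⁆, c⁆ := (lie_lie a b c).symm
    have e2 : ⁅J a, ⁅J b, c⁆⁆ - ⁅J b, ⁅J a, c⁆⁆ = ⁅⁅a, b⁆, c⁆ := by
      rw [← habel a b, lie_lie]
    have e3 : ⁅J a, ⁅b, c⁆⁆ - ⁅b, ⁅J a, c⁆⁆ = ⁅⁅J a, b⁆, c⁆ := (lie_lie (J a) b c).symm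
    have e4 : ⁅a, ⁅J b, c⁆⁆ - ⁅J b, ⁅a, c⁆⁆ = -⁅⁅J a, b⁆, c⁆ := by
      rw [← lie_lie, habel' a b, neg_lie]
    have j3 := congrArg J e3
    have j4 := congrArg J e4
    simp only [map_sub, map_neg] at j3 j4
    linear_combination (norm := module) (4⁻¹ : ℝ) • e1 - (4⁻¹ : ℝ) • e2
      + (4⁻¹ : ℝ) • j3 + (4⁻¹ : ℝ) • j4
  have bianchiN : ∀ a b c : V, nabla ⁅a, b⁆ c + nabla ⁅b, c⁆ a + nabla ⁅c, a⁆ b = 0 := by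
    intro a b c
    rw [formula ⁅a, b⁆ c, formula ⁅b, c⁆ a, formula ⁅c, a⁆ b]
    have h1 : ⁅⁅a, b⁆, J c⁆ = ⁅⁅J a, J b⁆, J c⁆ := by rw [habel a b]
    have h2 : ⁅⁅b, c⁆, J a⁆ = ⁅⁅J b, J c⁆, J a⁆ := by rw [habel b c]
    have h3 : ⁅⁅c, a⁆, J b⁆ = ⁅⁅J c, J a⁆, J b⁆ := by rw [habel c a]
    have jh1 := congrArg J h1
    have jh2 := congrArg J h2
    have jh3 := congrArg J h3
    have jaceq := jac a b c
    have jacJ := congrArg J (jac (J a) (J b) (J c))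
    simp only [map_add, map_zero] at jacJ
    linear_combination (norm := module) (2⁻¹ : ℝ) • jaceq - (2⁻¹ : ℝ) • jh1
      - (2⁻¹ : ℝ) • jh2 - (2⁻¹ : ℝ) • jh3 - (2⁻¹ : ℝ) • jacJ
  have NswapB : ∀ a b c d : V, B (nabla ⁅a, b⁆ c) d = - B (nabla ⁅b, a⁆ c) d := by
    intro a b c d
    rw [← lie_skew b a, map_neg, LinearMap.neg_apply, map_neg, LinearMap.neg_apply]
    exact (neg_neg _).symm
  have NskewCD : ∀ u c d : V, B (nabla u c) d = - B (nabla u d) c := by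
    intro u c d
    rw [skew, hsymm]
  have bianchiB : ∀ a b c d : V,
      B (nabla ⁅a, b⁆ c) d + B (nabla ⁅b, c⁆ a) d + B (nabla ⁅c, a⁆ b) d = 0 := by
    intro a b c d
    have h := congrArg (fun x => B x d) (bianchiN a b c)
    simpa [map_add] using h
  have pair : ∀ a b c d : V, B (nabla ⁅a, b⁆ c) d = B (nabla ⁅c, d⁆ a) b := by
    intro a b c d
    linarith [bianchiB a b c d, bianchiB b c d a, bianchiB c d a b, bianchiB d a b c,
      NskewCD ⁅b, c⁆ a d, NskewCD ⁅c, a⁆ b d, NskewCD ⁅c, d⁆ b a, NskewCD ⁅d, b⁆ c a,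
      NskewCD ⁅d, a⁆ c b, NskewCD ⁅a, c⁆ d b, NskewCD ⁅a, b⁆ d c, NskewCD ⁅b, d⁆ a c,
      NswapB b c a d, NswapB c b d a, NswapB c a b d, NswapB a c d b,
      NswapB d b c a, NswapB b d a c, NswapB d a c b, NswapB a d b c,
      NskewCD ⁅a, b⁆ c d, NskewCD ⁅c, d⁆ a b,
      NswapB c d a b, NswapB d c b a, NswapB a b c d, NswapB b a d c]
  have final : ∀ a b c d : V, B (nabla ⁅a, b⁆ c) d = 0 := by
    intro a b c d
    have h1 : B (nabla ⁅a, b⁆ c) d = B (nabla ⁅c, d⁆ a) b := pair a b c d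
    have h2 : B (nabla ⁅a, b⁆ c) d = - B (nabla ⁅c, d⁆ a) b := by
      calc B (nabla ⁅a, b⁆ c) d = B (nabla ⁅J a, J b⁆ c) d := by rw [habel]
        _ = B (nabla ⁅c, d⁆ (J a)) (J b) := pair (J a) (J b) c d
        _ = B (J (nabla ⁅c, d⁆ a)) (J b) := by rw [hAK]
        _ = - B (nabla ⁅c, d⁆ a) b := hJB _ _
    linarith
  have Nzero : ∀ a b c : V, nabla ⁅a, b⁆ c = 0 := by
    intro a b c
    exact hnd _ (fun d => final a b c d)
  refine ⟨fun X Y Z => ?_, fun X Y Z => Nzero X Y Z⟩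
  rw [Nzero X Y Z, A0 X Y Z]
  simp
end

section
/- Let 𝔤 be a Lie algebra with anti-Kähler structure (⟨·,·⟩, J), J abelian. Then for all X,Y,Z ∈ 𝔤: [J[X,Y], Z] = J[[X,Y], Z]. -/
/-- For an anti-Kähler Lie algebra structure with abelian complex structure,
`[J[X,Y], Z] = J[[X,Y], Z]` for all `X, Y, Z`. -/
theorem bracket_J_identity_of_antiKaehler_abelian
    (V : Type*) [LieRing V] [LieAlgebra ℝ V]
    (B : V →ₗ[ℝ] V →ₗ[ℝ] ℝ)
    (hsymm : ∀ X Y, B X Y = B Y X)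
    (hnd : ∀ X, (∀ Y, B X Y = 0) → X = 0)
    (J : V →ₗ[ℝ] V) (hJ2 : ∀ X, J (J X) = -X)
    (hJB : ∀ X Y, B (J X) (J Y) = - B X Y)
    (nabla : V →ₗ[ℝ] V →ₗ[ℝ] V)
    (hKoszul : ∀ X Y Z, 2 * B (nabla X Y) Z
        = B ⁅X, Y⁆ Z - B ⁅Y, Z⁆ X + B ⁅Z, X⁆ Y)
    (hAK : ∀ X Y, nabla X (J Y) = J (nabla X Y))
    (habel : ∀ X Y, ⁅J X, J Y⁆ = ⁅X, Y⁆) :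
    ∀ X Y Z : V, ⁅J ⁅X, Y⁆, Z⁆ = J ⁅⁅X, Y⁆, Z⁆ := by
  -- move J across B
  have BJ : ∀ u v : V, B (J u) v = B u (J v) := by
    intro u v
    have h := hJB u (J v)
    rw [hJ2, map_neg] at h
    exact neg_injective h
  -- move J inside brackets
  have V4 : ∀ u v : V, ⁅J u, v⁆ = -⁅u, J v⁆ := by
    intro u v
    have h := habel u (J v)
    rw [hJ2, lie_neg] at h
    rw [← h, neg_neg]
  have vsym : ∀ p q : V, ⁅p, J q⁆ = ⁅q, J p⁆ := by
    intro p q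
    rw [← lie_skew, V4, neg_neg]
  have skw : ∀ p q r : V, B ⁅p, q⁆ r = -B ⁅q, p⁆ r := by
    intro p q r
    rw [← lie_skew, map_neg, LinearMap.neg_apply]
  have jmv : ∀ p q r : V, B ⁅J p, q⁆ r = -B ⁅p, J q⁆ r := by
    intro p q r
    rw [V4, map_neg, LinearMap.neg_apply]
  have usym : ∀ p q r : V, B ⁅p, J q⁆ r = B ⁅q, J p⁆ r := by
    intro p q r
    rw [vsym]
  -- nondegeneracy
  have hnd2 : ∀ u v : V, (∀ w, B u w = B v w) → u = v := by
    intro u v h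
    have h0 : ∀ w, B (u - v) w = 0 := by
      intro w
      rw [map_sub, LinearMap.sub_apply, h w, sub_self]
    exact sub_eq_zero.mp (hnd _ h0)
  -- torsion-freeness
  have TF : ∀ u v : V, nabla u v - nabla v u = ⁅u, v⁆ := by
    intro u v
    apply hnd2
    intro w
    rw [map_sub, LinearMap.sub_apply]
    linarith [hKoszul u v w, hKoszul v u w, skw v u w, skw u w v, skw w v u]
  -- metricity
  have M : ∀ u v w : V, B (nabla u v) w + B (nabla u w) v = 0 := by
    intro u v w
    linarith [hKoszul u v w, hKoszul u w v, skw v u w, skw w v u, skw u w v]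
  -- normalized consequence of ∇J = 0 via Koszul
  have IDn : ∀ a b c : V,
      B ⁅a, J b⁆ c + 2 * B ⁅b, J c⁆ a + B ⁅a, J c⁆ b
        + B ⁅c, a⁆ (J b) - B ⁅a, b⁆ (J c) = 0 := by
    intro a b c
    have link : B (nabla a (J b)) c = B (nabla a b) (J c) := by
      rw [hAK, BJ]
    linarith [hKoszul a (J b) c, hKoszul a b (J c), link, jmv b c a, skw (J c) a b]
  -- ∇_{Ju} v = -J ∇_u v
  have P1 : ∀ u v : V, nabla (J u) v = -J (nabla u v) := by
    intro u v
    apply hnd2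
    intro w
    rw [map_neg, LinearMap.neg_apply]
    have e : B (J (nabla u v)) w = B (nabla u v) (J w) := BJ _ _
    linarith [hKoszul (J u) v w, hKoszul u v (J w), e,
      IDn u v w, IDn v u w, IDn w u v,
      jmv u v w, usym w u v, skw (J w) u v, usym v u w,
      skw w v (J u), skw v u (J w), usym w v u]
  -- expansion of ∇_{[a,b]} c
  have tl : ∀ a b c : V, nabla ⁅a, b⁆ c
      = ⁅⁅a, b⁆, c⁆ + (nabla c (nabla a b) - nabla c (nabla b a)) := by
    intro a b c
    have h2 : nabla c ⁅a, b⁆ = nabla c (nabla a b) - nabla c (nabla b a) := by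
      rw [← TF a b, map_sub]
    have h := eq_add_of_sub_eq (TF ⁅a, b⁆ c)
    rw [h2] at h
    exact h
  -- algebraic first Bianchi identity
  have VB : ∀ x y z : V,
      (nabla x (nabla y z) - nabla y (nabla x z) - nabla ⁅x, y⁆ z)
      + (nabla y (nabla z x) - nabla z (nabla y x) - nabla ⁅y, z⁆ x)
      + (nabla z (nabla x y) - nabla x (nabla z y) - nabla ⁅z, x⁆ y) = 0 := by
    intro x y z
    have f1 : (⁅z, x⁆ : V) = -⁅x, z⁆ := neg_eq_iff_eq_neg.mp (lie_skew x z)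
    have f2 : (⁅y, x⁆ : V) = -⁅x, y⁆ := neg_eq_iff_eq_neg.mp (lie_skew x y)
    have f3 : (⁅z, y⁆ : V) = -⁅y, z⁆ := neg_eq_iff_eq_neg.mp (lie_skew y z)
    have g1 : (⁅⁅y, z⁆, x⁆ : V) = -⁅x, ⁅y, z⁆⁆ :=
      neg_eq_iff_eq_neg.mp (lie_skew x ⁅y, z⁆)
    have g2 : (⁅⁅z, x⁆, y⁆ : V) = ⁅y, ⁅x, z⁆⁆ := by
      rw [f1, neg_lie, lie_skew]
    have jac : (⁅⁅x, y⁆, z⁆ + ⁅⁅y, z⁆, x⁆ + ⁅⁅z, x⁆, y⁆ : V) = 0 := by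
      rw [lie_lie, g1, g2]
      abel
    have jac' : (-(⁅⁅x, y⁆, z⁆ + ⁅⁅y, z⁆, x⁆ + ⁅⁅z, x⁆, y⁆) : V) = 0 :=
      neg_eq_zero.mpr jac
    rw [tl x y z, tl y z x, tl z x y, ← jac']
    abel
  -- paired Bianchi identity
  have BpB : ∀ x y z w : V,
      (B (nabla x (nabla y z)) w - B (nabla y (nabla x z)) w - B (nabla ⁅x, y⁆ z) w)
      + (B (nabla y (nabla z x)) w - B (nabla z (nabla y x)) w - B (nabla ⁅y, z⁆ x) w)
      + (B (nabla z (nabla x y)) w - B (nabla x (nabla z y)) w - B (nabla ⁅z, x⁆ y) w)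
        = 0 := by
    intro x y z w
    have h := congrArg (fun t => B t w) (VB x y z)
    simpa [map_add, map_sub, LinearMap.add_apply, LinearMap.sub_apply] using h
  -- swap lemma for second-order terms
  have A2L : ∀ p q r s : V, B (nabla p (nabla q r)) s = B (nabla q (nabla p s)) r := by
    intro p q r s
    linarith [M p (nabla q r) s, M q r (nabla p s), hsymm (nabla p s) (nabla q r)]
  have nskw : ∀ p q r s : V, B (nabla ⁅p, q⁆ r) s = -B (nabla ⁅q, p⁆ r) s := by
    intro p q r s
    have f : (⁅p, q⁆ : V) = -⁅q, p⁆ := neg_eq_iff_eq_neg.mp (lie_skew q p)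
    rw [f, map_neg, LinearMap.neg_apply, map_neg, LinearMap.neg_apply]
  -- pair symmetry of the curvature-type tensor
  have PS : ∀ x y z w : V,
      B (nabla x (nabla y z)) w - B (nabla y (nabla x z)) w - B (nabla ⁅x, y⁆ z) w
      = B (nabla z (nabla w x)) y - B (nabla w (nabla z x)) y
          - B (nabla ⁅z, w⁆ x) y := by
    intro x y z w
    linarith [BpB x y z w, BpB y z w x, BpB z w x y, BpB w x y z,
      A2L y z x w, A2L z y x w, A2L z x y w, A2L x z y w,
      A2L z w y x, A2L w z y x, A2L w y z x, A2L y w z x,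
      A2L w x z y, A2L x w z y, A2L x y w z, A2L y x w z,
      M ⁅y, z⁆ w x, M ⁅z, w⁆ y x, M ⁅x, y⁆ w z, M ⁅w, x⁆ z y,
      M ⁅y, w⁆ z x, M ⁅z, x⁆ w y,
      nskw w y z x, nskw x z w y]
  -- flatness: ∇_{[x,y]} = 0
  have Flat : ∀ x y z : V, nabla ⁅x, y⁆ z = 0 := by
    intro x y z
    apply hnd
    intro w
    have h1 := PS x y z w
    have h2 := PS (J x) (J y) z w
    rw [habel] at h2
    simp only [P1, hAK, map_neg, hJ2, neg_neg, hJB, LinearMap.neg_apply] at h2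
    linarith [h1, h2]
  -- conclusion
  intro X Y Z
  have e1 : ⁅J ⁅X, Y⁆, Z⁆ = -⁅⁅X, Y⁆, J Z⁆ := V4 _ _
  have e2 : (⁅⁅X, Y⁆, J Z⁆ : V) = nabla ⁅X, Y⁆ (J Z) - nabla (J Z) ⁅X, Y⁆ :=
    (TF _ _).symm
  have e3 : (⁅⁅X, Y⁆, Z⁆ : V) = nabla ⁅X, Y⁆ Z - nabla Z ⁅X, Y⁆ := (TF _ _).symm
  rw [e1, e2, e3, Flat, Flat, P1]
  simp
end

section
/- Let 𝔤 be a Lie algebra with an almost anti-Hermitian structure (⟨·,·⟩, J) and define θ(X,Y,Z) := ⟨[JX,Y],Z⟩ + ⟨[JY,Z],X⟩ + ⟨[JZ,X],Y⟩. Then the structure is anti-Kähler (∇J = 0 for the Levi-Civita connection) if and only if θ satisfies θ(X,Y,Z) = -θ(X,Z,Y) and θ(JX,Y,Z) = θ(X,JY,Z) for all X,Y,Z ∈ 𝔤. -/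
/-- The 3-tensor `θ(X,Y,Z) = ⟨[JX,Y],Z⟩ + ⟨[JY,Z],X⟩ + ⟨[JZ,X],Y⟩` associated
to a left invariant almost anti-Hermitian structure. -/
def antiHermitianTheta {V : Type*} [LieRing V] [LieAlgebra ℝ V]
    (B : V →ₗ[ℝ] V →ₗ[ℝ] ℝ) (J : V →ₗ[ℝ] V) (X Y Z : V) : ℝ :=
  B ⁅J X, Y⁆ Z + B ⁅J Y, Z⁆ X + B ⁅J Z, X⁆ Y

/-- A left invariant almost anti-Hermitian structure on a Lie group is
anti-Kähler if and only if the associated 3-tensor `θ` is skew-symmetric in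
the last two arguments and pure: `θ(X,Y,Z) = -θ(X,Z,Y)` and
`θ(JX,Y,Z) = θ(X,JY,Z)`. -/
theorem antiKaehler_iff_theta_skew_pure
    (V : Type*) [LieRing V] [LieAlgebra ℝ V]
    (B : V →ₗ[ℝ] V →ₗ[ℝ] ℝ)
    (hsymm : ∀ X Y, B X Y = B Y X)
    (hnd : ∀ X, (∀ Y, B X Y = 0) → X = 0)
    (J : V →ₗ[ℝ] V) (hJ2 : ∀ X, J (J X) = -X)
    (hJB : ∀ X Y, B (J X) (J Y) = - B X Y)
    (nabla : V →ₗ[ℝ] V →ₗ[ℝ] V)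
    (hKoszul : ∀ X Y Z, 2 * B (nabla X Y) Z
        = B ⁅X, Y⁆ Z - B ⁅Y, Z⁆ X + B ⁅Z, X⁆ Y) :
    (∀ X Y, nabla X (J Y) = J (nabla X Y)) ↔
      ((∀ X Y Z, antiHermitianTheta B J X Y Z = - antiHermitianTheta B J X Z Y) ∧
       (∀ X Y Z, antiHermitianTheta B J (J X) Y Z = antiHermitianTheta B J X (J Y) Z)) := by
  -- `B (J U) W = B U (J W)`
  have hJm : ∀ U W : V, B (J U) W = B U (J W) := by
    intro U W
    have h1 := hJB U (J W)
    rw [hJ2, map_neg] at h1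
    linarith
  -- skew symmetry of the bracket inside `B`
  have hsk : ∀ P Q C : V, B ⁅P, Q⁆ C = - B ⁅Q, P⁆ C := by
    intro P Q C
    rw [← lie_skew, map_neg, LinearMap.neg_apply]
  constructor
  · intro h
    -- the fundamental identity E(A,B,C) = 0
    have hE : ∀ A C D : V,
        B ⁅A, J C⁆ D - B ⁅J C, D⁆ A + B ⁅D, A⁆ (J C)
          - B ⁅A, C⁆ (J D) + B ⁅C, J D⁆ A - B ⁅J D, A⁆ C = 0 := by
      intro A C D
      have k1 := hKoszul A (J C) D
      have k2 := hKoszul A C (J D)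
      have h3 : B (nabla A (J C)) D = B (nabla A C) (J D) := by
        rw [h]; exact hJm _ _
      linarith
    constructor
    · intro X Y Z
      simp only [antiHermitianTheta]
      linarith [hE X Y Z, hE Y X Z, hE Z X Y,
        hsk (J X) Y Z, hsk (J Y) Z X, hsk X (J Z) Y, hsk (J X) Z Y,
        hsk Y (J Z) X, hsk X (J Y) Z, hsk X Z (J Y), hsk X Y (J Z),
        hsk Y Z (J X)]
    · intro X Y Z
      simp only [antiHermitianTheta, hJ2, neg_lie, lie_neg, map_neg,
        LinearMap.neg_apply, neg_neg]
      have e1 := hE X Y (J Z)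
      have e2 := hE (J X) Y Z
      have e3 := hE Z X (J Y)
      have e4 := hE (J Z) X Y
      simp only [hJ2, neg_lie, lie_neg, map_neg, LinearMap.neg_apply,
        neg_neg] at e1 e2 e3 e4
      linarith [e1, e2, e3, e4,
        hsk X Y Z, hsk (J Y) Z (J X), hsk (J X) (J Z) Y, hsk (J X) (J Y) Z,
        hsk Y Z X, hsk X (J Z) (J Y), hsk X (J Y) (J Z), hsk (J Y) (J Z) X,
        hsk X Z Y, hsk (J X) Z (J Y), hsk (J X) Y (J Z), hsk Y (J Z) (J X)]
  · rintro ⟨h1, h2⟩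
    intro X Y
    have key : ∀ Z, B (nabla X (J Y) - J (nabla X Y)) Z = 0 := by
      intro Z
      have k1 := hKoszul X (J Y) Z
      have k2 := hKoszul X Y (J Z)
      have hjm : B (J (nabla X Y)) Z = B (nabla X Y) (J Z) := hJm _ _
      have t1 := h1 X Y Z
      have t2 := h1 X (J Y) (J Z)
      have t3 := h2 X Y (J Z)
      have t4 := h2 X Z (J Y)
      simp only [antiHermitianTheta, hJ2, neg_lie, lie_neg, map_neg,
        LinearMap.neg_apply, neg_neg] at t1 t2 t3 t4
      rw [map_sub, LinearMap.sub_apply]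
      linarith [t1, t2, t3, t4,
        hsk X (J Y) Z, hsk (J Y) Z X, hsk X Z (J Y), hsk X Y (J Z),
        hsk Y (J Z) X, hsk X (J Z) Y, hsk (J X) Y Z, hsk (J X) Z Y,
        hsk (J X) (J Y) (J Z), hsk (J X) (J Z) (J Y), hsk (J Y) (J Z) (J X)]
    have h0 := hnd _ key
    exact sub_eq_zero.mp h0
end

section
/- Let 𝔤 be a Lie algebra with an almost anti-Hermitian structure (⟨·,·⟩, J) such that the 3-tensor θ(X,Y,Z) = ⟨[JX,Y],Z⟩ + ⟨[JY,Z],X⟩ + ⟨[JZ,X],Y⟩ vanishes identically on 𝔤. Then the structure is anti-Kähler: ∇_X(JY) = J∇_X Y for all X,Y ∈ 𝔤. -/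
/-- If the 3-tensor `θ` of a left invariant almost anti-Hermitian structure
vanishes identically, then the structure is anti-Kähler:
`∇_X (JY) = J ∇_X Y`. -/
theorem antiKaehler_of_theta_zero
    (V : Type*) [LieRing V] [LieAlgebra ℝ V]
    (B : V →ₗ[ℝ] V →ₗ[ℝ] ℝ)
    (hsymm : ∀ X Y, B X Y = B Y X)
    (hnd : ∀ X, (∀ Y, B X Y = 0) → X = 0)
    (J : V →ₗ[ℝ] V) (hJ2 : ∀ X, J (J X) = -X)
    (hJB : ∀ X Y, B (J X) (J Y) = - B X Y)
    (nabla : V →ₗ[ℝ] V →ₗ[ℝ] V)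
    (hKoszul : ∀ X Y Z, 2 * B (nabla X Y) Z
        = B ⁅X, Y⁆ Z - B ⁅Y, Z⁆ X + B ⁅Z, X⁆ Y)
    (htheta : ∀ X Y Z, antiHermitianTheta B J X Y Z = 0) :
    ∀ X Y, nabla X (J Y) = J (nabla X Y) := by
  intro X Y
  have Jsym : ∀ A C, B (J A) C = B A (J C) := by
    intro A C
    have h1 := hJB A (J C)
    rw [hJ2] at h1
    simpa using h1
  have sk : ∀ A C D : V, B ⁅A, C⁆ D = - B ⁅C, A⁆ D := by
    intro A C D
    rw [← lie_skew A C, map_neg, LinearMap.neg_apply]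
  have key : ∀ Z, B (nabla X (J Y) - J (nabla X Y)) Z = 0 := by
    intro Z
    have hk1 := hKoszul X (J Y) Z
    have hk2 := hKoszul X Y (J Z)
    have t1 := htheta X Z Y
    have t2 := htheta (J X) Y (J Z)
    have t3 := htheta (J X) Z (J Y)
    have t5 := htheta Y Z X
    unfold antiHermitianTheta at t1 t2 t3 t5
    simp only [hJ2, neg_lie, map_neg, LinearMap.neg_apply] at t2 t3
    have s1 := sk X (J Y) Z
    have s2 := sk Z X (J Y)
    have s3 := sk Y (J Z) X
    have s4 := sk (J Y) (J Z) (J X)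
    have s5 := sk Z (J X) Y
    have s6 := sk Y (J X) Z
    have hrw : B (nabla X (J Y) - J (nabla X Y)) Z
        = B (nabla X (J Y)) Z - B (nabla X Y) (J Z) := by
      rw [map_sub, LinearMap.sub_apply, Jsym]
    rw [hrw]
    linarith
  have := hnd _ key
  exact sub_eq_zero.mp this
end

section
/- Let 𝔤 = ℝ⁴ with basis {e₁,e₂,e₃,e₄} and brackets [e₁,e₃] = e₃, [e₁,e₄] = e₄, [e₂,e₃] = e₄, [e₂,e₄] = -e₃ (the realification of aff(ℂ)). Define J by Je₁ = e₂, Je₂ = -e₁, Je₃ = e₄, Je₄ = -e₃, and the symmetric bilinear form with ⟨e₁,e₁⟩ = 1, ⟨e₂,e₂⟩ = -1, ⟨e₃,e₃⟩ = 1, ⟨e₄,e₄⟩ = -1 and all other pairings zero. Then J is a bi-invariant complex structure ([JX,Y] = J[X,Y]), (⟨·,·⟩, J) is anti-Hermitian (⟨JX,JY⟩ = -⟨X,Y⟩), and the Levi-Civita connection satisfies ∇_X(JY) = J∇_X Y for all X,Y ∈ 𝔤, i.e. the structure is anti-Kähler. -/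
/-- Pointwise equality of bilinear maps can be checked on a basis. -/
lemma bilin_ext_on_basis {V W : Type*} [AddCommGroup V] [Module ℝ V]
    [AddCommGroup W] [Module ℝ W] (e : Module.Basis (Fin 4) ℝ V)
    (f g : V →ₗ[ℝ] V →ₗ[ℝ] W)
    (h : ∀ i j : Fin 4, f (e i) (e j) = g (e i) (e j)) :
    ∀ X Y : V, f X Y = g X Y := by
  have hfg : f = g := e.ext fun i => e.ext fun j => h i j
  intro X Y; rw [hfg]

set_option maxHeartbeats 1600000 in
/-- The realification of `aff(ℂ)`: a real Lie algebra with basis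
`e₁, e₂, e₃, e₄` and brackets `[e₁,e₃] = e₃`, `[e₁,e₄] = e₄`, `[e₂,e₃] = e₄`,
`[e₂,e₄] = -e₃` (all other basis brackets zero), with `J e₁ = e₂`,
`J e₂ = -e₁`, `J e₃ = e₄`, `J e₄ = -e₃` and the diagonal symmetric form
`⟨e₁,e₁⟩ = 1`, `⟨e₂,e₂⟩ = -1`, `⟨e₃,e₃⟩ = 1`, `⟨e₄,e₄⟩ = -1`, carries a
left invariant anti-Kähler structure: `J` is bi-invariant, the form is
anti-Hermitian, and the Levi-Civita connection (Koszul formula) satisfies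
`∇_X (JY) = J ∇_X Y`. -/
theorem affC_antiKaehler
    (V : Type*) [LieRing V] [LieAlgebra ℝ V]
    (e : Module.Basis (Fin 4) ℝ V)
    (h13 : ⁅e 0, e 2⁆ = e 2) (h14 : ⁅e 0, e 3⁆ = e 3)
    (h23 : ⁅e 1, e 2⁆ = e 3) (h24 : ⁅e 1, e 3⁆ = -e 2)
    (h12 : ⁅e 0, e 1⁆ = 0) (h34 : ⁅e 2, e 3⁆ = 0)
    (J : V →ₗ[ℝ] V)
    (hJ1 : J (e 0) = e 1) (hJ2' : J (e 1) = -e 0)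
    (hJ3 : J (e 2) = e 3) (hJ4 : J (e 3) = -e 2)
    (B : V →ₗ[ℝ] V →ₗ[ℝ] ℝ)
    (hB1 : B (e 0) (e 0) = 1) (hB2 : B (e 1) (e 1) = -1)
    (hB3 : B (e 2) (e 2) = 1) (hB4 : B (e 3) (e 3) = -1)
    (hBoff : ∀ i j : Fin 4, i ≠ j → B (e i) (e j) = 0)
    (nabla : V →ₗ[ℝ] V →ₗ[ℝ] V)
    (hKoszul : ∀ X Y Z, 2 * B (nabla X Y) Z
        = B ⁅X, Y⁆ Z - B ⁅Y, Z⁆ X + B ⁅Z, X⁆ Y) :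
    (∀ X Y : V, ⁅J X, Y⁆ = J ⁅X, Y⁆) ∧
    (∀ X Y : V, B (J X) (J Y) = - B X Y) ∧
    (∀ X Y : V, nabla X (J Y) = J (nabla X Y)) := by
  -- full bracket table
  have h21 : ⁅e 1, e 0⁆ = 0 := by rw [← lie_skew, h12, neg_zero]
  have h31 : ⁅e 2, e 0⁆ = -e 2 := by rw [← lie_skew, h13]
  have h41 : ⁅e 3, e 0⁆ = -e 3 := by rw [← lie_skew, h14]
  have h32 : ⁅e 2, e 1⁆ = -e 3 := by rw [← lie_skew, h23]
  have h42 : ⁅e 3, e 1⁆ = e 2 := by rw [← lie_skew, h24, neg_neg]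
  have h43 : ⁅e 3, e 2⁆ = 0 := by rw [← lie_skew, h34, neg_zero]
  have h11 : ⁅e 0, e 0⁆ = 0 := lie_self _
  have h22 : ⁅e 1, e 1⁆ = 0 := lie_self _
  have h33 : ⁅e 2, e 2⁆ = 0 := lie_self _
  have h44 : ⁅e 3, e 3⁆ = 0 := lie_self _
  have b01 := hBoff 0 1 (by decide)
  have b02 := hBoff 0 2 (by decide)
  have b03 := hBoff 0 3 (by decide)
  have b10 := hBoff 1 0 (by decide)
  have b12 := hBoff 1 2 (by decide)
  have b13 := hBoff 1 3 (by decide)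
  have b20 := hBoff 2 0 (by decide)
  have b21 := hBoff 2 1 (by decide)
  have b23 := hBoff 2 3 (by decide)
  have b30 := hBoff 3 0 (by decide)
  have b31 := hBoff 3 1 (by decide)
  have b32 := hBoff 3 2 (by decide)
  -- coordinate representation via B
  have hrep : ∀ v : V, v = B v (e 0) • e 0 + (-(B v (e 1))) • e 1
      + B v (e 2) • e 2 + (-(B v (e 3))) • e 3 := by
    intro v
    have hv : v = e.repr v 0 • e 0 + e.repr v 1 • e 1
        + e.repr v 2 • e 2 + e.repr v 3 • e 3 := by
      conv_lhs => rw [← e.sum_repr v]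
      rw [Fin.sum_univ_four]
    have c0 : B v (e 0) = e.repr v 0 := by
      conv_lhs => rw [hv]
      simp [hB1, b10, b20, b30]
    have c1 : B v (e 1) = -(e.repr v 1) := by
      conv_lhs => rw [hv]
      simp [hB2, b01, b21, b31]
    have c2 : B v (e 2) = e.repr v 2 := by
      conv_lhs => rw [hv]
      simp [hB3, b02, b12, b32]
    have c3 : B v (e 3) = -(e.repr v 3) := by
      conv_lhs => rw [hv]
      simp [hB4, b03, b13, b23]
    rw [c0, c1, c2, c3, neg_neg, neg_neg]
    exact hv
  have hBn : ∀ X Y : V, ∀ k : Fin 4, B (nabla X Y) (e k)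
      = (1/2) * (B ⁅X, Y⁆ (e k) - B ⁅Y, e k⁆ X + B ⁅e k, X⁆ Y) := by
    intro X Y k
    have h := hKoszul X Y (e k)
    linarith
  have n00 : nabla (e 0) (e 0) = 0 := by
    rw [hrep (nabla (e 0) (e 0)), hBn, hBn, hBn, hBn]
    simp only [h11, h12, h13, h14, h21, h22, h23, h24, h31, h32, h33, h34,
      h41, h42, h43, h44, map_neg, map_zero, LinearMap.neg_apply, LinearMap.zero_apply,
      hB1, hB2, hB3, hB4, b01, b02, b03, b10, b12, b13, b20, b21, b23, b30, b31, b32]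
    module
  have n01 : nabla (e 0) (e 1) = 0 := by
    rw [hrep (nabla (e 0) (e 1)), hBn, hBn, hBn, hBn]
    simp only [h11, h12, h13, h14, h21, h22, h23, h24, h31, h32, h33, h34,
      h41, h42, h43, h44, map_neg, map_zero, LinearMap.neg_apply, LinearMap.zero_apply,
      hB1, hB2, hB3, hB4, b01, b02, b03, b10, b12, b13, b20, b21, b23, b30, b31, b32]
    module
  have n02 : nabla (e 0) (e 2) = 0 := by
    rw [hrep (nabla (e 0) (e 2)), hBn, hBn, hBn, hBn]
    simp only [h11, h12, h13, h14, h21, h22, h23, h24, h31, h32, h33, h34,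
      h41, h42, h43, h44, map_neg, map_zero, LinearMap.neg_apply, LinearMap.zero_apply,
      hB1, hB2, hB3, hB4, b01, b02, b03, b10, b12, b13, b20, b21, b23, b30, b31, b32]
    module
  have n03 : nabla (e 0) (e 3) = 0 := by
    rw [hrep (nabla (e 0) (e 3)), hBn, hBn, hBn, hBn]
    simp only [h11, h12, h13, h14, h21, h22, h23, h24, h31, h32, h33, h34,
      h41, h42, h43, h44, map_neg, map_zero, LinearMap.neg_apply, LinearMap.zero_apply,
      hB1, hB2, hB3, hB4, b01, b02, b03, b10, b12, b13, b20, b21, b23, b30, b31, b32]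
    module
  have n10 : nabla (e 1) (e 0) = 0 := by
    rw [hrep (nabla (e 1) (e 0)), hBn, hBn, hBn, hBn]
    simp only [h11, h12, h13, h14, h21, h22, h23, h24, h31, h32, h33, h34,
      h41, h42, h43, h44, map_neg, map_zero, LinearMap.neg_apply, LinearMap.zero_apply,
      hB1, hB2, hB3, hB4, b01, b02, b03, b10, b12, b13, b20, b21, b23, b30, b31, b32]
    module
  have n11 : nabla (e 1) (e 1) = 0 := by
    rw [hrep (nabla (e 1) (e 1)), hBn, hBn, hBn, hBn]
    simp only [h11, h12, h13, h14, h21, h22, h23, h24, h31, h32, h33, h34,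
      h41, h42, h43, h44, map_neg, map_zero, LinearMap.neg_apply, LinearMap.zero_apply,
      hB1, hB2, hB3, hB4, b01, b02, b03, b10, b12, b13, b20, b21, b23, b30, b31, b32]
    module
  have n12 : nabla (e 1) (e 2) = 0 := by
    rw [hrep (nabla (e 1) (e 2)), hBn, hBn, hBn, hBn]
    simp only [h11, h12, h13, h14, h21, h22, h23, h24, h31, h32, h33, h34,
      h41, h42, h43, h44, map_neg, map_zero, LinearMap.neg_apply, LinearMap.zero_apply,
      hB1, hB2, hB3, hB4, b01, b02, b03, b10, b12, b13, b20, b21, b23, b30, b31, b32]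
    module
  have n13 : nabla (e 1) (e 3) = 0 := by
    rw [hrep (nabla (e 1) (e 3)), hBn, hBn, hBn, hBn]
    simp only [h11, h12, h13, h14, h21, h22, h23, h24, h31, h32, h33, h34,
      h41, h42, h43, h44, map_neg, map_zero, LinearMap.neg_apply, LinearMap.zero_apply,
      hB1, hB2, hB3, hB4, b01, b02, b03, b10, b12, b13, b20, b21, b23, b30, b31, b32]
    module
  have n20 : nabla (e 2) (e 0) = -e 2 := by
    rw [hrep (nabla (e 2) (e 0)), hBn, hBn, hBn, hBn]
    simp only [h11, h12, h13, h14, h21, h22, h23, h24, h31, h32, h33, h34,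
      h41, h42, h43, h44, map_neg, map_zero, LinearMap.neg_apply, LinearMap.zero_apply,
      hB1, hB2, hB3, hB4, b01, b02, b03, b10, b12, b13, b20, b21, b23, b30, b31, b32]
    module
  have n21 : nabla (e 2) (e 1) = -e 3 := by
    rw [hrep (nabla (e 2) (e 1)), hBn, hBn, hBn, hBn]
    simp only [h11, h12, h13, h14, h21, h22, h23, h24, h31, h32, h33, h34,
      h41, h42, h43, h44, map_neg, map_zero, LinearMap.neg_apply, LinearMap.zero_apply,
      hB1, hB2, hB3, hB4, b01, b02, b03, b10, b12, b13, b20, b21, b23, b30, b31, b32]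
    module
  have n22 : nabla (e 2) (e 2) = e 0 := by
    rw [hrep (nabla (e 2) (e 2)), hBn, hBn, hBn, hBn]
    simp only [h11, h12, h13, h14, h21, h22, h23, h24, h31, h32, h33, h34,
      h41, h42, h43, h44, map_neg, map_zero, LinearMap.neg_apply, LinearMap.zero_apply,
      hB1, hB2, hB3, hB4, b01, b02, b03, b10, b12, b13, b20, b21, b23, b30, b31, b32]
    module
  have n23 : nabla (e 2) (e 3) = e 1 := by
    rw [hrep (nabla (e 2) (e 3)), hBn, hBn, hBn, hBn]
    simp only [h11, h12, h13, h14, h21, h22, h23, h24, h31, h32, h33, h34,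
      h41, h42, h43, h44, map_neg, map_zero, LinearMap.neg_apply, LinearMap.zero_apply,
      hB1, hB2, hB3, hB4, b01, b02, b03, b10, b12, b13, b20, b21, b23, b30, b31, b32]
    module
  have n30 : nabla (e 3) (e 0) = -e 3 := by
    rw [hrep (nabla (e 3) (e 0)), hBn, hBn, hBn, hBn]
    simp only [h11, h12, h13, h14, h21, h22, h23, h24, h31, h32, h33, h34,
      h41, h42, h43, h44, map_neg, map_zero, LinearMap.neg_apply, LinearMap.zero_apply,
      hB1, hB2, hB3, hB4, b01, b02, b03, b10, b12, b13, b20, b21, b23, b30, b31, b32]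
    module
  have n31 : nabla (e 3) (e 1) = e 2 := by
    rw [hrep (nabla (e 3) (e 1)), hBn, hBn, hBn, hBn]
    simp only [h11, h12, h13, h14, h21, h22, h23, h24, h31, h32, h33, h34,
      h41, h42, h43, h44, map_neg, map_zero, LinearMap.neg_apply, LinearMap.zero_apply,
      hB1, hB2, hB3, hB4, b01, b02, b03, b10, b12, b13, b20, b21, b23, b30, b31, b32]
    module
  have n32 : nabla (e 3) (e 2) = e 1 := by
    rw [hrep (nabla (e 3) (e 2)), hBn, hBn, hBn, hBn]
    simp only [h11, h12, h13, h14, h21, h22, h23, h24, h31, h32, h33, h34,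
      h41, h42, h43, h44, map_neg, map_zero, LinearMap.neg_apply, LinearMap.zero_apply,
      hB1, hB2, hB3, hB4, b01, b02, b03, b10, b12, b13, b20, b21, b23, b30, b31, b32]
    module
  have n33 : nabla (e 3) (e 3) = -e 0 := by
    rw [hrep (nabla (e 3) (e 3)), hBn, hBn, hBn, hBn]
    simp only [h11, h12, h13, h14, h21, h22, h23, h24, h31, h32, h33, h34,
      h41, h42, h43, h44, map_neg, map_zero, LinearMap.neg_apply, LinearMap.zero_apply,
      hB1, hB2, hB3, hB4, b01, b02, b03, b10, b12, b13, b20, b21, b23, b30, b31, b32]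
    module
  refine ⟨?_, ?_, ?_⟩
  · have key := bilin_ext_on_basis e
      (((LinearMap.mk₂ ℝ (fun X Y : V => ⁅X, Y⁆) add_lie
        (fun c m n => smul_lie c m n) lie_add
        (fun c m n => lie_smul c m n)).comp J))
      ((LinearMap.mk₂ ℝ (fun X Y : V => ⁅X, Y⁆) add_lie
        (fun c m n => smul_lie c m n) lie_add
        (fun c m n => lie_smul c m n)).compr₂ J)
      (by
        intro i j
        fin_cases i <;> fin_cases j <;>
          simp [LinearMap.mk₂_apply, hJ1, hJ2', hJ3, hJ4,
            h11, h12, h13, h14, h21, h22, h23, h24, h31, h32, h33, h34,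
            h41, h42, h43, h44])
    intro X Y
    simpa using key X Y
  · have key := bilin_ext_on_basis e ((B.comp J).compl₂ J) (-B)
      (by
        intro i j
        fin_cases i <;> fin_cases j <;>
          simp [LinearMap.compl₂_apply, LinearMap.comp_apply, LinearMap.neg_apply,
            hJ1, hJ2', hJ3, hJ4, hB1, hB2, hB3, hB4,
            b01, b02, b03, b10, b12, b13, b20, b21, b23, b30, b31, b32])
    intro X Y
    simpa using key X Y
  · have key := bilin_ext_on_basis e (nabla.compl₂ J) (nabla.compr₂ J)
      (by
        intro i j
        fin_cases i <;> fin_cases j <;>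
          simp [LinearMap.compl₂_apply, LinearMap.compr₂_apply,
            hJ1, hJ2', hJ3, hJ4, n00, n01, n02, n03, n10, n11, n12, n13,
            n20, n21, n22, n23, n30, n31, n32, n33])
    intro X Y
    simpa using key X Y
end
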